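/- arXiv:1708.09640 — 3 statements merged into one kernel-verified Lean document; each statement's English description precedes it below -/
import Mathlib

section
/- Let P_k = 𝓛_k + V_k (k = 1,2) be two Schrödinger operators on ℝ^d as in the context, with λ_k* their generalized principal eigenvalues. Assume: a₁ = a₂ and b₁ = b₂ outside a compact set K ⊂ ℝ^d; V₂ ≥ V₁ outside a compact set; V₂(x) − V₁(x) → 0 as |x| → ∞; P₁ − λ₁* is critical in ℝ^d with ground state Ψ₁*; λ₂* ≤ λ₁*; and there exist a C² function Ψ with Ψ⁺ not identically zero and C > 0 such that 𝓛₂Ψ + V₂Ψ ≥ λ₁*Ψ on ℝ^d and Ψ⁺ ≤ C Ψ₁* on ℝ^d. Then λ₁* = λ₂*. -/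
open Metric Set Filter

noncomputable section

/-- `ℝ^d` as a Euclidean space. -/
abbrev Euc (d : ℕ) := EuclideanSpace ℝ (Fin d)

/-- First partial derivative `∂u/∂xᵢ`. -/
def pd {d : ℕ} (u : Euc d → ℝ) (i : Fin d) (x : Euc d) : ℝ :=
  fderiv ℝ u x (EuclideanSpace.single i 1)

/-- Second partial derivative `∂²u/∂xᵢ∂xⱼ`. -/
def pd2 {d : ℕ} (u : Euc d → ℝ) (i j : Fin d) (x : Euc d) : ℝ :=
  fderiv ℝ (fun y => pd u j y) x (EuclideanSpace.single i 1)

/-- The second-order operator `𝓛u = Σ aᶦʲ ∂ᵢⱼu + Σ bᶦ ∂ᵢu`. -/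
def Lop {d : ℕ} (a : Euc d → Matrix (Fin d) (Fin d) ℝ) (b : Euc d → Euc d)
    (u : Euc d → ℝ) (x : Euc d) : ℝ :=
  (∑ i, ∑ j, a x i j * pd2 u i j x) + ∑ i, b x i * pd u i x

/-- Frobenius norm of a matrix. -/
def frob {d : ℕ} (m : Matrix (Fin d) (Fin d) ℝ) : ℝ :=
  Real.sqrt (∑ i, ∑ j, (m i j) ^ 2)

/-- The quadratic form `⟨ξ, m ξ⟩`. -/
def quadForm {d : ℕ} (m : Matrix (Fin d) (Fin d) ℝ) (ξ : Euc d) : ℝ :=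
  ∑ i, ∑ j, m i j * ξ i * ξ j

/-- Local Hölder continuity on a set. -/
def LocallyHolderOn {E F : Type*} [PseudoMetricSpace E] [PseudoMetricSpace F]
    (f : E → F) (s : Set E) : Prop :=
  ∀ x ∈ s, ∃ (C r : NNReal), 0 < r ∧ r ≤ 1 ∧ ∃ ε > 0, HolderOnWith C r f (Metric.ball x ε ∩ s)

/-- Local Hölder continuity. -/
def LocallyHolder {E F : Type*} [PseudoMetricSpace E] [PseudoMetricSpace F] (f : E → F) : Prop :=
  LocallyHolderOn f Set.univ

/-- The set of `λ ∈ ℝ` admitting a positive C² supersolution of `𝓛φ + Vφ ≤ λφ` on `D`. -/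
def supersolutions {d : ℕ} (a : Euc d → Matrix (Fin d) (Fin d) ℝ) (b : Euc d → Euc d)
    (V : Euc d → ℝ) (D : Set (Euc d)) : Set ℝ :=
  {lam | ∃ φ : Euc d → ℝ, (∀ x ∈ D, 0 < φ x) ∧ ContDiffOn ℝ 2 φ D ∧
    ∀ x ∈ D, Lop a b φ x + V x * φ x ≤ lam * φ x}

/-- The generalized principal eigenvalue `λ*(𝓛,V)` on `D`. -/
def lamStar {d : ℕ} (a : Euc d → Matrix (Fin d) (Fin d) ℝ) (b : Euc d → Euc d)
    (V : Euc d → ℝ) (D : Set (Euc d)) : ℝ :=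
  sInf (supersolutions a b V D)

/-- `λ*(𝓛,V)` is finite: the defining set is nonempty and bounded below. -/
def lamStarFinite {d : ℕ} (a : Euc d → Matrix (Fin d) (Fin d) ℝ) (b : Euc d → Euc d)
    (V : Euc d → ℝ) (D : Set (Euc d)) : Prop :=
  (supersolutions a b V D).Nonempty ∧ BddBelow (supersolutions a b V D)

/-- A ground state of `𝓛 + W` in the open connected set `D`: a positive C² solution of
minimal growth at infinity. -/
def IsGroundState {d : ℕ} (a : Euc d → Matrix (Fin d) (Fin d) ℝ) (b : Euc d → Euc d)
    (W : Euc d → ℝ) (u : Euc d → ℝ) (D : Set (Euc d)) : Prop :=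
  (∀ x ∈ D, 0 < u x) ∧ ContDiffOn ℝ 2 u D ∧ (∀ x ∈ D, Lop a b u x + W x * u x = 0) ∧
  ∀ K : Set (Euc d), IsCompact K → K ⊆ D →
    ∀ v : Euc d → ℝ, ContDiffOn ℝ 2 v (D \ K) → (∀ x ∈ D \ K, 0 < v x) →
      (∀ x ∈ D \ K, Lop a b v x + W x * v x ≤ 0) →
      ∃ K' : Set (Euc d), IsCompact K' ∧ K ⊆ K' ∧ K' ⊆ D ∧
        ∃ κ > 0, ∀ x ∈ D \ K', κ * u x ≤ v x

/-- Membership in `C₀⁺(ℝ^d)`: continuous, nonnegative, not identically zero, vanishing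
at infinity. -/
def C0plus {d : ℕ} (h : Euc d → ℝ) : Prop :=
  Continuous h ∧ (∀ x, 0 ≤ h x) ∧ (∃ x, h x ≠ 0) ∧ Tendsto h (cocompact (Euc d)) (nhds 0)

/-- `λ*` is strictly monotone at `V` on the right. -/
def StrictMonoRight {d : ℕ} (a : Euc d → Matrix (Fin d) (Fin d) ℝ) (b : Euc d → Euc d)
    (V : Euc d → ℝ) : Prop :=
  ∀ h : Euc d → ℝ, C0plus h →
    lamStar a b V Set.univ < lamStar a b (fun x => V x + h x) Set.univ

/-- `λ*` is strictly monotone at `V` (on both sides). -/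
def StrictMonoAt {d : ℕ} (a : Euc d → Matrix (Fin d) (Fin d) ℝ) (b : Euc d → Euc d)
    (V : Euc d → ℝ) : Prop :=
  ∀ h : Euc d → ℝ, C0plus h →
    lamStar a b (fun x => V x - h x) Set.univ < lamStar a b V Set.univ ∧
    lamStar a b V Set.univ < lamStar a b (fun x => V x + h x) Set.univ

/-- Standing assumptions (A1)–(A3) with `b` Borel measurable and locally bounded. -/
structure StandingB {d : ℕ} (a : Euc d → Matrix (Fin d) (Fin d) ℝ) (b : Euc d → Euc d) : Prop where
  posdef : ∀ x, (a x).PosDef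
  aLip : ∀ R > 0, ∃ C > 0, ∀ x y : Euc d, ‖x‖ ≤ R → ‖y‖ ≤ R →
    frob (a x - a y) ≤ C * ‖x - y‖
  bMeas : Measurable b
  bLocBdd : ∀ R > 0, ∃ C, ∀ x : Euc d, ‖x‖ ≤ R → ‖b x‖ ≤ C
  nondeg : ∀ R > 0, ∃ C > 0, ∀ x : Euc d, ‖x‖ ≤ R → ∀ ξ : Euc d,
    C⁻¹ * ‖ξ‖ ^ 2 ≤ quadForm (a x) ξ
  growth : ∃ C₀ > 0, ∀ x : Euc d,
    max (∑ i, b x i * x i) 0 + frob (a x) ≤ C₀ * (1 + ‖x‖ ^ 2)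

/-- Standing assumptions (A1)–(A3) with `b` locally Hölder continuous. -/
structure StandingH {d : ℕ} (a : Euc d → Matrix (Fin d) (Fin d) ℝ) (b : Euc d → Euc d) : Prop where
  posdef : ∀ x, (a x).PosDef
  aLip : ∀ R > 0, ∃ C > 0, ∀ x y : Euc d, ‖x‖ ≤ R → ‖y‖ ≤ R →
    frob (a x - a y) ≤ C * ‖x - y‖
  bHolder : LocallyHolder b
  nondeg : ∀ R > 0, ∃ C > 0, ∀ x : Euc d, ‖x‖ ≤ R → ∀ ξ : Euc d,
    C⁻¹ * ‖ξ‖ ^ 2 ≤ quadForm (a x) ξ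
  growth : ∃ C₀ > 0, ∀ x : Euc d,
    max (∑ i, b x i * x i) 0 + frob (a x) ≤ C₀ * (1 + ‖x‖ ^ 2)


section AuxLemmas

open Matrix

variable {d : ℕ}

lemma contDiff_fderiv (u : Euc d → ℝ) (hu : ContDiff ℝ 2 u) :
    ContDiff ℝ 1 (fderiv ℝ u) :=
  hu.fderiv_right (by norm_num)

lemma contDiff_pd (u : Euc d → ℝ) (hu : ContDiff ℝ 2 u) (j : Fin d) :
    ContDiff ℝ 1 (fun x => pd u j x) := by
  have h := (ContinuousLinearMap.apply ℝ ℝ (EuclideanSpace.single (𝕜 := ℝ) j 1)).contDiff.comp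
    (contDiff_fderiv u hu)
  exact h

lemma pd2_eq (u : Euc d → ℝ) (hu : ContDiff ℝ 2 u) (i j : Fin d) (x : Euc d) :
    pd2 u i j x
      = fderiv ℝ (fderiv ℝ u) x (EuclideanSpace.single i 1) (EuclideanSpace.single j 1) := by
  have hd : DifferentiableAt ℝ (fderiv ℝ u) x :=
    ((contDiff_fderiv u hu).differentiable one_ne_zero).differentiableAt
  have h0 := (ContinuousLinearMap.apply ℝ ℝ
      (EuclideanSpace.single (𝕜 := ℝ) j 1)).hasFDerivAt.comp x hd.hasFDerivAt
  have h : HasFDerivAt (fun y => pd u j y)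
      ((ContinuousLinearMap.apply ℝ ℝ (EuclideanSpace.single (𝕜 := ℝ) j 1)).comp
        (fderiv ℝ (fderiv ℝ u) x)) x := h0
  simp only [pd2, h.fderiv]
  rfl

lemma pd_comb (f g : Euc d → ℝ) (hf : ContDiff ℝ 2 f) (hg : ContDiff ℝ 2 g) (c t : ℝ)
    (j : Fin d) (x : Euc d) :
    pd (fun y => c * f y - t * g y) j x = c * pd f j x - t * pd g j x := by
  have hfd : DifferentiableAt ℝ f x := (hf.differentiable (by norm_num)).differentiableAt
  have hgd : DifferentiableAt ℝ g x := (hg.differentiable (by norm_num)).differentiableAt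
  simp only [pd]
  rw [fderiv_fun_sub ((hfd.const_mul c)) ((hgd.const_mul t)), fderiv_const_mul hfd,
    fderiv_const_mul hgd]
  simp

lemma pd_comb_fun (f g : Euc d → ℝ) (hf : ContDiff ℝ 2 f) (hg : ContDiff ℝ 2 g) (c t : ℝ)
    (j : Fin d) :
    (fun x => pd (fun y => c * f y - t * g y) j x) = fun x => c * pd f j x - t * pd g j x :=
  funext (pd_comb f g hf hg c t j)

lemma pd2_comb (f g : Euc d → ℝ) (hf : ContDiff ℝ 2 f) (hg : ContDiff ℝ 2 g) (c t : ℝ)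
    (i j : Fin d) (x : Euc d) :
    pd2 (fun y => c * f y - t * g y) i j x = c * pd2 f i j x - t * pd2 g i j x := by
  have hfd : DifferentiableAt ℝ (fun y => pd f j y) x :=
    ((contDiff_pd f hf j).differentiable one_ne_zero).differentiableAt
  have hgd : DifferentiableAt ℝ (fun y => pd g j y) x :=
    ((contDiff_pd g hg j).differentiable one_ne_zero).differentiableAt
  simp only [pd2, pd_comb_fun f g hf hg c t j]
  rw [fderiv_fun_sub ((hfd.const_mul c)) ((hgd.const_mul t)), fderiv_const_mul hfd,
    fderiv_const_mul hgd]
  simp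

lemma Lop_comb (a : Euc d → Matrix (Fin d) (Fin d) ℝ) (b : Euc d → Euc d)
    (f g : Euc d → ℝ) (hf : ContDiff ℝ 2 f) (hg : ContDiff ℝ 2 g) (c t : ℝ) (x : Euc d) :
    Lop a b (fun y => c * f y - t * g y) x = c * Lop a b f x - t * Lop a b g x := by
  simp only [Lop, pd_comb f g hf hg c t, pd2_comb f g hf hg c t]
  have hA : ∑ i, ∑ j, a x i j * (c * pd2 f i j x - t * pd2 g i j x)
      = c * (∑ i, ∑ j, a x i j * pd2 f i j x) - t * (∑ i, ∑ j, a x i j * pd2 g i j x) := by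
    rw [Finset.mul_sum, Finset.mul_sum, ← Finset.sum_sub_distrib]
    refine Finset.sum_congr rfl fun i _ => ?_
    rw [Finset.mul_sum, Finset.mul_sum, ← Finset.sum_sub_distrib]
    exact Finset.sum_congr rfl fun j _ => by ring
  have hB : ∑ i, b x i * (c * pd f i x - t * pd g i x)
      = c * (∑ i, b x i * pd f i x) - t * (∑ i, b x i * pd g i x) := by
    rw [Finset.mul_sum, Finset.mul_sum, ← Finset.sum_sub_distrib]
    exact Finset.sum_congr rfl fun i _ => by ring
  rw [hA, hB]; ring

lemma Lop_congr (a₁ a₂ : Euc d → Matrix (Fin d) (Fin d) ℝ) (b₁ b₂ : Euc d → Euc d)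
    (u : Euc d → ℝ) (x : Euc d) (ha : a₁ x = a₂ x) (hb : b₁ x = b₂ x) :
    Lop a₁ b₁ u x = Lop a₂ b₂ u x := by
  simp only [Lop, ha, hb]

lemma snd_nonneg_of_min (u : Euc d → ℝ) (hu : ContDiff ℝ 2 u) (x₀ : Euc d)
    (hmin : ∀ x, u x₀ ≤ u x) (ξ : Euc d) :
    0 ≤ fderiv ℝ (fderiv ℝ u) x₀ ξ ξ := by
  by_contra hcon
  push_neg at hcon
  set B := fderiv ℝ (fderiv ℝ u) x₀ with hBdef
  set q : ℝ := B ξ ξ with hqdef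
  set L : ℝ → Euc d := fun t => x₀ + t • ξ with hLdef
  have hL : ∀ t : ℝ, HasDerivAt L ξ t := by
    intro t
    have h1 : HasDerivAt (fun s : ℝ => s • ξ) ((1:ℝ) • ξ) t := (hasDerivAt_id t).smul_const ξ
    rw [one_smul] at h1
    exact h1.const_add x₀
  have hL0 : L 0 = x₀ := by simp [hLdef]
  have hudiff : Differentiable ℝ u := hu.differentiable (by norm_num)
  set g₁ : ℝ → ℝ := fun t => fderiv ℝ u (L t) ξ with hg₁def
  have hg : ∀ t : ℝ, HasDerivAt (fun s => u (L s)) (g₁ t) t := fun t =>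
    (hudiff (L t)).hasFDerivAt.comp_hasDerivAt t (hL t)
  have hBfd : HasFDerivAt (fderiv ℝ u) B x₀ :=
    (((contDiff_fderiv u hu).differentiable one_ne_zero) x₀).hasFDerivAt
  have hBL : HasDerivAt (fun t => fderiv ℝ u (L t)) (B ξ) 0 := by
    have hBfd' : HasFDerivAt (fderiv ℝ u) B (L 0) := by rw [hL0]; exact hBfd
    exact hBfd'.comp_hasDerivAt 0 (hL 0)
  have hg₁d : HasDerivAt g₁ q 0 := by
    have := (ContinuousLinearMap.apply ℝ ℝ ξ).hasFDerivAt.comp_hasDerivAt 0 hBL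
    exact this
  have hloc : IsLocalMin u x₀ := Filter.Eventually.of_forall hmin
  have hg₁0 : g₁ 0 = 0 := by
    simp [hg₁def, hL0, hloc.fderiv_eq_zero]
  have hslope : Tendsto (slope g₁ 0) (nhdsWithin (0:ℝ) {(0:ℝ)}ᶜ) (nhds q) :=
    hasDerivAt_iff_tendsto_slope.mp hg₁d
  have hev : ∀ᶠ t in nhdsWithin (0:ℝ) {(0:ℝ)}ᶜ, slope g₁ 0 t < q/2 :=
    hslope.eventually_lt_const (by linarith)
  have hev' : ∀ᶠ t in nhdsWithin (0:ℝ) (Set.Ioi 0), slope g₁ 0 t < q/2 :=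
    hev.filter_mono (nhdsWithin_mono 0 (fun t ht => ne_of_gt ht))
  obtain ⟨δ, hδ, hIoo⟩ := mem_nhdsGT_iff_exists_Ioo_subset.mp hev'
  have hδ0 : (0:ℝ) < δ := hδ
  have hneg : ∀ t ∈ Ioo (0:ℝ) δ, g₁ t < 0 := by
    intro t ht
    have hs : slope g₁ 0 t < q/2 := hIoo ht
    have ht0 : (0:ℝ) < t := ht.1
    rw [slope_def_field, hg₁0, sub_zero, sub_zero, div_lt_iff₀ ht0] at hs
    nlinarith
  have hanti : StrictAntiOn (fun s => u (L s)) (Icc 0 δ) := by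
    apply strictAntiOn_of_deriv_neg (convex_Icc 0 δ)
    · exact fun t _ => (hg t).continuousAt.continuousWithinAt
    · intro t ht
      rw [interior_Icc] at ht
      rw [(hg t).deriv]
      exact hneg t ht
  have h1 : u (L (δ/2)) < u (L 0) := by
    have h0m : (0:ℝ) ∈ Icc 0 δ := ⟨le_rfl, le_of_lt hδ0⟩
    have hdm : δ/2 ∈ Icc 0 δ := ⟨by linarith, by linarith⟩
    exact hanti h0m hdm (by linarith)
  rw [hL0] at h1
  exact absurd (hmin (L (δ/2))) (not_le.mpr h1)

lemma quad_pd2_nonneg (u : Euc d → ℝ) (hu : ContDiff ℝ 2 u) (x₀ : Euc d)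
    (hmin : ∀ x, u x₀ ≤ u x) (v : Fin d → ℝ) :
    0 ≤ ∑ i, ∑ j, pd2 u i j x₀ * v i * v j := by
  have h := snd_nonneg_of_min u hu x₀ hmin (∑ i, v i • (EuclideanSpace.single i (1:ℝ)))
  simp only [map_sum, _root_.map_smul, ContinuousLinearMap.coe_sum', Finset.sum_apply,
    ContinuousLinearMap.coe_smul', Pi.smul_apply, smul_eq_mul] at h
  refine le_trans h (le_of_eq ?_)
  simp only [Finset.mul_sum]
  rw [Finset.sum_comm]
  refine Finset.sum_congr rfl fun i _ => Finset.sum_congr rfl fun j _ => ?_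
  rw [pd2_eq u hu i j x₀]
  ring

lemma psd_trace_nonneg (M : Matrix (Fin d) (Fin d) ℝ) (hM : M.PosSemidef) : 0 ≤ M.trace := by
  rw [Matrix.trace]
  apply Finset.sum_nonneg
  intro i _
  have h := hM.dotProduct_mulVec_nonneg (Pi.single i 1)
  simpa [dotProduct, Matrix.mulVec, Pi.single_apply, Finset.mul_sum,
    Finset.sum_ite_eq, Finset.sum_ite_eq'] using h

lemma dot_mulVec_eq (G : Matrix (Fin d) (Fin d) ℝ) (v : Fin d → ℝ) :
    dotProduct v (G.mulVec v) = ∑ i, ∑ j, G i j * v i * v j := by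
  simp only [dotProduct, Matrix.mulVec, Finset.mul_sum]
  exact Finset.sum_congr rfl fun i _ => Finset.sum_congr rfl fun j _ => by ring

open scoped MatrixOrder in
lemma trace_pair_nonneg (A H : Matrix (Fin d) (Fin d) ℝ) (hA : A.PosDef)
    (hq : ∀ v : Fin d → ℝ, 0 ≤ ∑ i, ∑ j, H i j * v i * v j) :
    0 ≤ ∑ i, ∑ j, A i j * H i j := by
  set Ms : Matrix (Fin d) (Fin d) ℝ := Matrix.of fun i j => (H i j + H j i)/2 with hMsdef
  have hMssymm : ∀ i j, Ms i j = Ms j i := by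
    intro i j; simp only [hMsdef, Matrix.of_apply]; ring
  have hswap : ∀ v : Fin d → ℝ, ∑ i, ∑ j, H j i * v i * v j = ∑ i, ∑ j, H i j * v i * v j := by
    intro v
    rw [Finset.sum_comm]
    exact Finset.sum_congr rfl fun j _ => Finset.sum_congr rfl fun i _ => by ring
  have hMsq : ∀ v : Fin d → ℝ, ∑ i, ∑ j, Ms i j * v i * v j = ∑ i, ∑ j, H i j * v i * v j := by
    intro v
    calc ∑ i, ∑ j, Ms i j * v i * v j
        = ∑ i, ∑ j, (H i j * v i * v j + H j i * v i * v j)/2 :=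
          Finset.sum_congr rfl fun i _ => Finset.sum_congr rfl fun j _ => by
            simp only [hMsdef, Matrix.of_apply]; ring
      _ = ((∑ i, ∑ j, H i j * v i * v j) + (∑ i, ∑ j, H j i * v i * v j))/2 := by
          simp only [← Finset.sum_div, Finset.sum_add_distrib]
      _ = ∑ i, ∑ j, H i j * v i * v j := by rw [hswap]; ring
  have hMs : Ms.PosSemidef := by
    refine Matrix.PosSemidef.of_dotProduct_mulVec_nonneg ?_ ?_
    · ext i j
      simp only [Matrix.conjTranspose_apply, star_trivial]
      exact (hMssymm j i)
    · intro v
      have : dotProduct (star v) (Ms.mulVec v) = ∑ i, ∑ j, H i j * v i * v j := by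
        rw [star_trivial, dot_mulVec_eq, hMsq]
      rw [this]; exact hq v
  set S := CFC.sqrt A with hSdef
  have hconj : (Sᴴ * Ms * S).PosSemidef := hMs.conjTranspose_mul_mul_same S
  have htr0 : 0 ≤ (Sᴴ * Ms * S).trace := psd_trace_nonneg _ hconj
  have hSH : Sᴴ = S := (CFC.sqrt_nonneg A).posSemidef.isHermitian
  have htr1 : (Sᴴ * Ms * S).trace = (A * Ms).trace := by
    rw [hSH, Matrix.trace_mul_cycle, CFC.sqrt_mul_sqrt_self A hA.posSemidef.nonneg]
  have hAsymm : ∀ i j, A j i = A i j := by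
    intro i j
    have h := congrFun (congrFun hA.posSemidef.isHermitian.eq j) i
    simpa [Matrix.conjTranspose_apply] using h.symm
  have hfinal : (A * Ms).trace = ∑ i, ∑ j, A i j * H i j := by
    rw [Matrix.trace]
    calc ∑ i, (A * Ms).diag i
        = ∑ i, ∑ j, A i j * Ms i j := by
          refine Finset.sum_congr rfl fun i _ => ?_
          rw [Matrix.diag_apply, Matrix.mul_apply]
          exact Finset.sum_congr rfl fun j _ => by rw [hMssymm i j]
      _ = ∑ i, ∑ j, (A i j * H i j + A i j * H j i)/2 := by
          refine Finset.sum_congr rfl fun i _ => Finset.sum_congr rfl fun j _ => ?_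
          simp only [hMsdef, Matrix.of_apply]; ring
      _ = ((∑ i, ∑ j, A i j * H i j) + (∑ i, ∑ j, A i j * H j i))/2 := by
          simp only [← Finset.sum_div, Finset.sum_add_distrib]
      _ = ∑ i, ∑ j, A i j * H i j := by
          have : ∑ i, ∑ j, A i j * H j i = ∑ i, ∑ j, A i j * H i j := by
            rw [Finset.sum_comm]
            refine Finset.sum_congr rfl fun j _ => Finset.sum_congr rfl fun i _ => ?_
            rw [hAsymm j i]
          rw [this]; ring
  rw [← hfinal, ← htr1]
  exact htr0

end AuxLemmas

/-- Lemma 3.2: equality of principal eigenvalues under the comparison hypotheses. -/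
theorem statement9 {d : ℕ} (hd : 1 ≤ d)
    (a₁ a₂ : Euc d → Matrix (Fin d) (Fin d) ℝ) (b₁ b₂ : Euc d → Euc d) (V₁ V₂ : Euc d → ℝ)
    (hstand₁ : StandingH a₁ b₁) (hstand₂ : StandingH a₂ b₂)
    (hV₁reg : LocallyHolder V₁) (hV₂reg : LocallyHolder V₂)
    (hV₁bdd : ∃ m, ∀ x, m ≤ V₁ x) (hV₂bdd : ∃ m, ∀ x, m ≤ V₂ x)
    (hfin₁ : lamStarFinite a₁ b₁ V₁ Set.univ) (hfin₂ : lamStarFinite a₂ b₂ V₂ Set.univ)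
    (hpert : ∃ K : Set (Euc d), IsCompact K ∧ ∀ x ∉ K, a₁ x = a₂ x ∧ b₁ x = b₂ x)
    (hVord : ∃ K : Set (Euc d), IsCompact K ∧ ∀ x ∉ K, V₁ x ≤ V₂ x)
    (hVdiff : Tendsto (fun x => V₂ x - V₁ x) (cocompact (Euc d)) (nhds 0))
    (Ψ₁ : Euc d → ℝ)
    (hgs₁ : IsGroundState a₁ b₁ (fun x => V₁ x - lamStar a₁ b₁ V₁ Set.univ) Ψ₁ Set.univ)
    (hlam : lamStar a₂ b₂ V₂ Set.univ ≤ lamStar a₁ b₁ V₁ Set.univ)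
    (Ψ : Euc d → ℝ) (hΨC2 : ContDiff ℝ 2 Ψ) (hΨplus : ∃ x, 0 < Ψ x)
    (hsub : ∀ x, lamStar a₁ b₁ V₁ Set.univ * Ψ x ≤ Lop a₂ b₂ Ψ x + V₂ x * Ψ x)
    (C : ℝ) (hC : 0 < C) (hbound : ∀ x, max (Ψ x) 0 ≤ C * Ψ₁ x) :
    lamStar a₁ b₁ V₁ Set.univ = lamStar a₂ b₂ V₂ Set.univ := by
  classical
  set lam1 := lamStar a₁ b₁ V₁ Set.univ with hlam1def
  refine le_antisymm ?_ hlam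
  apply le_csInf hfin₂.1
  intro lam hmem
  by_contra hcon
  push_neg at hcon
  obtain ⟨φ, hφpos', hφC2', hφsuper'⟩ := hmem
  have hφpos : ∀ x, 0 < φ x := fun x => hφpos' x (mem_univ x)
  have hφC2 : ContDiff ℝ 2 φ := contDiffOn_univ.mp hφC2'
  have hφsuper : ∀ x, Lop a₂ b₂ φ x + V₂ x * φ x ≤ lam * φ x := fun x => hφsuper' x (mem_univ x)
  obtain ⟨Kp, hKp, hpe⟩ := hpert
  obtain ⟨Kv, hKv, hve⟩ := hVord
  set K₀ := Kp ∪ Kv with hK₀def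
  have hK₀ : IsCompact K₀ := hKp.union hKv
  have hae : ∀ x, x ∉ K₀ → a₁ x = a₂ x :=
    fun x hx => (hpe x (fun h => hx (mem_union_left _ h))).1
  have hbe : ∀ x, x ∉ K₀ → b₁ x = b₂ x :=
    fun x hx => (hpe x (fun h => hx (mem_union_left _ h))).2
  have hVle : ∀ x, x ∉ K₀ → V₁ x ≤ V₂ x :=
    fun x hx => hve x (fun h => hx (mem_union_right _ h))
  obtain ⟨hΨ₁pos', hΨ₁C2, hΨ₁eq, hmin⟩ := hgs₁
  have hΨ₁pos : ∀ x, 0 < Ψ₁ x := fun x => hΨ₁pos' x (mem_univ x)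
  have hΨle : ∀ x, Ψ x ≤ C * Ψ₁ x := fun x => le_trans (le_max_left _ _) (hbound x)
  -- ground-state minimality wrapper
  have GS : ∀ v : Euc d → ℝ, ContDiff ℝ 2 v → (∀ x, x ∉ K₀ → 0 < v x) →
      (∀ x, x ∉ K₀ → Lop a₁ b₁ v x + (V₁ x - lam1) * v x ≤ 0) →
      ∃ K' : Set (Euc d), IsCompact K' ∧ ∃ κ > 0, ∀ x, x ∉ K' → κ * Ψ₁ x ≤ v x := by
    intro v hv hvpos hvsup
    obtain ⟨K', hK'c, _, _, κ, hκ, hb⟩ := hmin K₀ hK₀ (subset_univ _) v hv.contDiffOn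
      (fun x hx => hvpos x hx.2) (fun x hx => hvsup x hx.2)
    exact ⟨K', hK'c, κ, hκ, fun x hx => hb x ⟨mem_univ x, hx⟩⟩
  -- first application : v = φ
  have hφsup1 : ∀ x, x ∉ K₀ → Lop a₁ b₁ φ x + (V₁ x - lam1) * φ x ≤ 0 := by
    intro x hx
    rw [Lop_congr a₁ a₂ b₁ b₂ φ x (hae x hx) (hbe x hx)]
    have h1 := hφsuper x
    have h2 := hVle x hx
    have hp := hφpos x
    nlinarith [mul_nonneg hp.le (sub_nonneg.mpr hcon.le),
      mul_nonneg (sub_nonneg.mpr h2) hp.le]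
  obtain ⟨K₁, hK₁c, κ, hκ, hκb⟩ := GS φ hφC2 (fun x _ => hφpos x) hφsup1
  -- the supremum s of Ψ/φ
  set g := fun x => Ψ x / φ x with hgdef
  have hgcont : Continuous g := (hΨC2.continuous).div (hφC2.continuous) (fun x => (hφpos x).ne')
  have hbdd : BddAbove (Set.range g) := by
    obtain ⟨M₁, hM₁⟩ := (hK₁c.image hgcont).bddAbove
    refine ⟨max M₁ (C/κ), ?_⟩
    rintro y ⟨x, rfl⟩
    by_cases hx : x ∈ K₁
    · exact le_max_of_le_left (hM₁ (mem_image_of_mem g hx))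
    · refine le_max_of_le_right ?_
      have h1 : Ψ x ≤ C * Ψ₁ x := hΨle x
      have h2 : κ * Ψ₁ x ≤ φ x := hκb x hx
      have h3 : Ψ x ≤ (C/κ) * φ x := by
        have h4 : C * Ψ₁ x ≤ (C/κ) * φ x := by
          rw [div_mul_eq_mul_div, le_div_iff₀ hκ]
          nlinarith [hΨ₁pos x]
        linarith
      exact (div_le_iff₀ (hφpos x)).mpr h3
  have hne : (Set.range g).Nonempty := ⟨g 0, ⟨0, rfl⟩⟩
  set s := sSup (Set.range g) with hsdef
  have hgle : ∀ x, g x ≤ s := fun x => le_csSup hbdd ⟨x, rfl⟩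
  have hΨles : ∀ x, Ψ x ≤ s * φ x := by
    intro x
    have h := hgle x
    rw [hgdef] at h
    exact (div_le_iff₀ (hφpos x)).mp h
  obtain ⟨x₁, hx₁⟩ := hΨplus
  have hspos : 0 < s := by
    have h0 : 0 < Ψ x₁ / φ x₁ := div_pos hx₁ (hφpos x₁)
    exact lt_of_lt_of_le h0 (hgle x₁)
  -- the function w = sφ - Ψ
  set w := fun x => s * φ x - 1 * Ψ x with hwdef
  have hwval : ∀ x, w x = s * φ x - Ψ x := fun x => by rw [hwdef]; ring
  have hwC2 : ContDiff ℝ 2 w := (contDiff_const.mul hφC2).sub (contDiff_const.mul hΨC2)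
  have hP2w : ∀ x, Lop a₂ b₂ w x + (V₂ x - lam1) * w x ≤ s * (lam - lam1) * φ x := by
    intro x
    have hL : Lop a₂ b₂ w x = s * Lop a₂ b₂ φ x - 1 * Lop a₂ b₂ Ψ x := by
      rw [hwdef]; exact Lop_comb a₂ b₂ φ Ψ hφC2 hΨC2 s 1 x
    rw [hL, hwval x]
    have h1 := hφsuper x
    have h2 := hsub x
    nlinarith [mul_le_mul_of_nonneg_left h1 hspos.le]
  by_cases hatt : ∃ x₀, Ψ x₀ = s * φ x₀
  · -- supremum attained : interior minimum of w, contradiction via maximum principle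
    obtain ⟨x₀, hx₀⟩ := hatt
    have hw0 : w x₀ = 0 := by rw [hwval, hx₀]; ring
    have hwmin : ∀ x, w x₀ ≤ w x := by
      intro x
      rw [hw0, hwval]
      have := hΨles x
      linarith
    have hloc : IsLocalMin w x₀ := Filter.Eventually.of_forall hwmin
    have hfz : fderiv ℝ w x₀ = 0 := hloc.fderiv_eq_zero
    have hpdz : ∀ i, pd w i x₀ = 0 := fun i => by simp [pd, hfz]
    have htr := trace_pair_nonneg (a₂ x₀) (Matrix.of fun i j => pd2 w i j x₀)
      (hstand₂.posdef x₀)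
      (fun v => by simpa using quad_pd2_nonneg w hwC2 x₀ hwmin v)
    simp only [Matrix.of_apply] at htr
    have hLw0 : Lop a₂ b₂ w x₀ = ∑ i, ∑ j, a₂ x₀ i j * pd2 w i j x₀ := by
      simp [Lop, hpdz]
    have hineq := hP2w x₀
    rw [hw0] at hineq
    rw [hLw0] at hineq
    nlinarith [mul_pos (mul_pos hspos (sub_pos.mpr hcon)) (hφpos x₀)]
  · -- supremum not attained : w > 0 everywhere, use minimal growth again
    push_neg at hatt
    have hwpos : ∀ x, 0 < w x := by
      intro x
      rw [hwval]
      have h1 := hΨles x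
      have h2 := hatt x
      cases lt_or_eq_of_le h1 with
      | inl h => linarith
      | inr h => exact absurd h h2
    have hwsup : ∀ x, x ∉ K₀ → Lop a₁ b₁ w x + (V₁ x - lam1) * w x ≤ 0 := by
      intro x hx
      rw [Lop_congr a₁ a₂ b₁ b₂ w x (hae x hx) (hbe x hx)]
      have h := hP2w x
      have h2 := hVle x hx
      have h3 := (hwpos x).le
      nlinarith [mul_nonneg (sub_nonneg.mpr h2) h3,
        mul_pos (mul_pos hspos (sub_pos.mpr hcon)) (hφpos x)]
    obtain ⟨K₃, hK₃c, κ₂, hκ₂, hκ₂b⟩ := GS w hwC2 (fun x _ => hwpos x) hwsup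
    set s' := s / (1 + κ₂ / C) with hs'def
    have hfac : 1 < 1 + κ₂ / C := by
      have := div_pos hκ₂ hC
      linarith
    have hfac0 : (0:ℝ) < 1 + κ₂ / C := by linarith
    have hs' : s' < s := div_lt_self hspos hfac
    have hs'pos : 0 < s' := div_pos hspos hfac0
    have hoff : ∀ x, x ∉ K₃ → g x ≤ s' := by
      intro x hx
      rcases le_or_gt (Ψ x) 0 with h | h
      · have hgx : g x ≤ 0 := div_nonpos_of_nonpos_of_nonneg h (hφpos x).le
        linarith
      · have hb1 : κ₂ * Ψ₁ x ≤ s * φ x - Ψ x := by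
          have := hκ₂b x hx
          rw [hwval] at this
          linarith
        have hb2 : Ψ x / C ≤ Ψ₁ x := by
          rw [div_le_iff₀ hC]
          nlinarith [hΨle x]
        have hb3 : Ψ x * (1 + κ₂/C) ≤ s * φ x := by
          have h5 : κ₂ * (Ψ x / C) ≤ κ₂ * Ψ₁ x := mul_le_mul_of_nonneg_left hb2 hκ₂.le
          have h6 : Ψ x * (1 + κ₂/C) = Ψ x + κ₂ * (Ψ x / C) := by ring
          linarith
        have hgoal : Ψ x ≤ s' * φ x := by
          rw [hs'def, div_mul_eq_mul_div, le_div_iff₀ hfac0]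
          nlinarith
        exact (div_le_iff₀ (hφpos x)).mpr hgoal
    have hbig : ∃ B, B < s ∧ ∀ x, g x ≤ B := by
      rcases eq_empty_or_nonempty K₃ with hE | hNE
      · exact ⟨s', hs', fun x => hoff x (by rw [hE]; exact notMem_empty x)⟩
      · obtain ⟨y, hyK, hymax⟩ := hK₃c.exists_isMaxOn hNE hgcont.continuousOn
        refine ⟨max s' (g y), ?_, ?_⟩
        · apply max_lt hs'
          rcases lt_or_eq_of_le (hgle y) with h | h
          · exact h
          · exfalso
            apply hatt y
            rw [hgdef] at h
            have := (div_eq_iff (hφpos y).ne').mp h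
            linarith
        · intro x
          by_cases hx : x ∈ K₃
          · exact le_max_of_le_right (hymax hx)
          · exact le_max_of_le_left (hoff x hx)
    obtain ⟨B, hBs, hB⟩ := hbig
    have : s ≤ B := csSup_le hne (by rintro y ⟨x, rfl⟩; exact hB x)
    linarith
end
end

section
/- Let d ≥ 1, let a : ℝ^d → (symmetric positive definite d×d real matrices) and b : ℝ^d → ℝ^d, and suppose there are constants M > 0, η₀ > 0, β ∈ [0,2] and R₁ > 0 such that for all |x| ≥ R₁: |⟨b(x),x⟩| ≤ M|x|^β and ⟨ξ, a(x)ξ⟩ ≥ η₀|ξ|² for all ξ ∈ ℝ^d. Let α ≥ β and let K, γ > 0 satisfy Kα > M/(2η₀) + √(M²/(4η₀²) + γ/η₀), and assume |x|^{−α} Σ_{i=1}^d a^{ii}(x) → 0 as |x| → ∞. Define Λ(x) := exp(−K|x|^α). Then there exists r₀ ≥ 1 such that for all |x| ≥ r₀: Σ_{i,j=1}^d a^{ij}(x) ∂²Λ(x)/∂x_i∂x_j + Σ_{i=1}^d b^i(x) ∂Λ(x)/∂x_i ≥ γ |x|^{2α−2} Λ(x). -/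
open Metric Set Filter

noncomputable section

section Aux

variable {d : ℕ}

lemma rpow_norm_deriv (p : ℝ) {x : Euc d} (hx : x ≠ 0) :
    HasFDerivAt (fun y : Euc d => ‖y‖ ^ p) ((p * ‖x‖ ^ (p - 2)) • innerSL ℝ x) x := by
  have hs : (0:ℝ) < ‖x‖ := norm_pos_iff.mpr hx
  have h1 : HasFDerivAt (fun y : Euc d => ‖y‖ ^ 2) ((2:ℝ) • innerSL ℝ x) x := by
    have := (hasFDerivAt_id x).norm_sq
    simpa [two_smul] using this
  have h2 := h1.rpow_const (p := p/2) (Or.inl (by positivity))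
  have key : ∀ y : Euc d, (‖y‖ ^ 2 : ℝ) ^ (p/2) = ‖y‖ ^ p := by
    intro y
    rw [← Real.rpow_natCast ‖y‖ 2, ← Real.rpow_mul (norm_nonneg y)]
    congr 1
    push_cast; ring
  have h3 : HasFDerivAt (fun y : Euc d => ‖y‖ ^ p)
      ((p/2 * (‖x‖ ^ 2 : ℝ) ^ (p/2 - 1)) • ((2:ℝ) • innerSL ℝ x)) x := by
    simpa [key] using h2
  convert h3 using 1
  have : ((‖x‖:ℝ) ^ 2 : ℝ) ^ (p/2 - 1) = ‖x‖ ^ (p - 2) := by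
    rw [← Real.rpow_natCast ‖x‖ 2, ← Real.rpow_mul (norm_nonneg x)]
    congr 1
    push_cast; ring
  rw [smul_smul, this]
  ring_nf

lemma lam_deriv (K α : ℝ) {x : Euc d} (hx : x ≠ 0) :
    HasFDerivAt (fun y : Euc d => Real.exp (-(K * ‖y‖ ^ α)))
      ((-(K * α) * ‖x‖ ^ (α - 2) * Real.exp (-(K * ‖x‖ ^ α))) • innerSL ℝ x) x := by
  have h1 := ((rpow_norm_deriv α hx).const_mul (-K)).exp
  have : (fun y : Euc d => Real.exp (-K * ‖y‖ ^ α)) =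
      (fun y : Euc d => Real.exp (-(K * ‖y‖ ^ α))) := by
    funext y; ring_nf
  rw [this] at h1
  refine h1.congr_fderiv ?_
  rw [smul_smul, smul_smul]
  congr 1
  ring_nf

lemma pd_lam (K α : ℝ) {x : Euc d} (hx : x ≠ 0) (j : Fin d) :
    pd (fun y : Euc d => Real.exp (-(K * ‖y‖ ^ α))) j x =
      -(K * α) * ‖x‖ ^ (α - 2) * Real.exp (-(K * ‖x‖ ^ α)) * x j := by
  unfold pd
  rw [(lam_deriv K α hx).fderiv]
  simp [real_inner_comm, EuclideanSpace.inner_single_right]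

lemma pd2_lam (K α : ℝ) {x : Euc d} (hx : x ≠ 0) (i j : Fin d) :
    pd2 (fun y : Euc d => Real.exp (-(K * ‖y‖ ^ α))) i j x =
      Real.exp (-(K * ‖x‖ ^ α)) *
        ((((K*α)^2 * (‖x‖ ^ (α-2) * ‖x‖ ^ (α-2)) - (K*α)*(α-2) * ‖x‖ ^ (α-4)) * (x i * x j))
          - (K*α) * ‖x‖ ^ (α-2) * (if j = i then 1 else 0)) := by
  have hev : (fun y => pd (fun z : Euc d => Real.exp (-(K * ‖z‖ ^ α))) j y)
      =ᶠ[nhds x] (fun y : Euc d =>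
        -(K*α) * ‖y‖ ^ (α-2) * Real.exp (-(K * ‖y‖ ^ α)) * y j) := by
    filter_upwards [IsOpen.mem_nhds isOpen_compl_singleton hx] with y hy
    exact pd_lam K α hy j
  have h1 := (rpow_norm_deriv (α-2) hx).const_mul (-(K*α))
  have h2 := (h1.mul (lam_deriv K α hx)).mul (EuclideanSpace.proj (𝕜 := ℝ) j).hasFDerivAt
  simp only [EuclideanSpace.proj, PiLp.proj_apply] at h2
  unfold pd2
  rw [hev.fderiv_eq, HasFDerivAt.fderiv (f := fun y : Euc d => -(K*α) * ‖y‖ ^ (α-2) * Real.exp (-(K * ‖y‖ ^ α)) * y j) h2]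
  have hα4 : α - 2 - 2 = α - 4 := by ring
  simp only [hα4, Pi.mul_apply, ContinuousLinearMap.add_apply, ContinuousLinearMap.smul_apply,
    ContinuousLinearMap.coe_smul', Pi.smul_apply, innerSL_apply_apply, smul_eq_mul,
    EuclideanSpace.single_apply]
  rw [show (inner ℝ x (EuclideanSpace.single i (1:ℝ)) : ℝ) = x i by
    simp [EuclideanSpace.inner_single_right]]
  rw [show (PiLp.proj 2 (fun _ : Fin d => ℝ) j) (EuclideanSpace.single i (1:ℝ))
      = (if j = i then (1:ℝ) else 0) by
    simp [PiLp.proj_apply, EuclideanSpace.single_apply]]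
  ring

lemma coord_le_norm (x : Euc d) (i : Fin d) : |x i| ≤ ‖x‖ := by
  have h1 : (x i)^2 ≤ ∑ j, (x j)^2 := by
    apply Finset.single_le_sum (f := fun j => (x j)^2) (fun j _ => sq_nonneg _)
      (Finset.mem_univ i)
  have h2 : ‖x‖^2 = ∑ j, (x j)^2 := by
    rw [EuclideanSpace.norm_eq, Real.sq_sqrt]
    · simp [sq_abs]
    · positivity
  calc |x i| = Real.sqrt ((x i)^2) := (Real.sqrt_sq_eq_abs _).symm
    _ ≤ Real.sqrt (‖x‖^2) := Real.sqrt_le_sqrt (by rw [h2]; exact h1)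
    _ = ‖x‖ := by rw [Real.sqrt_sq (norm_nonneg x)]

lemma quadForm_single (m : Matrix (Fin d) (Fin d) ℝ) (i : Fin d) :
    quadForm m (EuclideanSpace.single i 1) = m i i := by
  unfold quadForm
  simp [EuclideanSpace.single_apply, mul_ite, ite_mul, Finset.sum_ite_eq']

lemma quadForm_single_single (m : Matrix (Fin d) (Fin d) ℝ) (i j : Fin d) (s t : ℝ) :
    quadForm m (EuclideanSpace.single i s + EuclideanSpace.single j t) =
      m i i * s * s + m i j * s * t + m j i * t * s + m j j * t * t ∨ i = j := by
  by_cases hij : i = j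
  · right; exact hij
  · left
    unfold quadForm
    have happ : ∀ k, (EuclideanSpace.single i s + EuclideanSpace.single j t : Euc d) k
        = (if k = i then s else 0) + (if k = j then t else 0) := by
      intro k
      simp [EuclideanSpace.single_apply]
    simp only [happ, mul_add, add_mul, mul_ite, ite_mul, mul_zero, zero_mul,
      Finset.sum_add_distrib, Finset.sum_ite_eq', Finset.mem_univ, if_true, hij, Ne.symm hij]
    ring

lemma quad_le_trace (m : Matrix (Fin d) (Fin d) ℝ)
    (hsym : ∀ i j, m i j = m j i) (h0 : ∀ ξ : Euc d, 0 ≤ quadForm m ξ) (x : Euc d) :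
    quadForm m x ≤ d * (∑ i, m i i) * ‖x‖^2 := by
  have hdiag : ∀ i, 0 ≤ m i i := by
    intro i
    have h := h0 (EuclideanSpace.single i 1)
    rwa [quadForm_single] at h
  have hoff : ∀ i j, |m i j| ≤ (m i i + m j j) / 2 := by
    intro i j
    by_cases hij : i = j
    · subst hij
      rw [abs_of_nonneg (hdiag i)]; linarith [hdiag i]
    · have h1 := h0 (EuclideanSpace.single i 1 + EuclideanSpace.single j 1)
      have h2 := h0 (EuclideanSpace.single i 1 + EuclideanSpace.single j (-1))
      rcases quadForm_single_single m i j 1 1 with he | he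
      · rcases quadForm_single_single m i j 1 (-1) with he2 | he2
        · rw [he] at h1; rw [he2] at h2
          have hs := hsym i j
          rw [abs_le]; constructor <;> nlinarith
        · exact absurd he2 hij
      · exact absurd he hij
  set u : Fin d → ℝ := fun i => |x i| with hu
  have hu0 : ∀ i, 0 ≤ u i := fun i => abs_nonneg _
  have hun : ∀ i, u i ≤ ‖x‖ := fun i => coord_le_norm x i
  have step1 : quadForm m x ≤ ∑ i, ∑ j, (m i i + m j j) / 2 * (u i * u j) := by
    apply Finset.sum_le_sum; intro i _
    apply Finset.sum_le_sum; intro j _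
    calc m i j * x i * x j ≤ |m i j * x i * x j| := le_abs_self _
      _ = |m i j| * (u i * u j) := by rw [abs_mul, abs_mul]; ring
      _ ≤ (m i i + m j j) / 2 * (u i * u j) :=
        mul_le_mul_of_nonneg_right (hoff i j) (by positivity)
  have hcomm : ∑ i, ∑ j, m j j / 2 * (u i * u j) = ∑ i, ∑ j, m i i / 2 * (u i * u j) := by
    rw [Finset.sum_comm]
    exact Finset.sum_congr rfl fun i _ => Finset.sum_congr rfl fun j _ => by ring
  have step2 : ∑ i, ∑ j, (m i i + m j j) / 2 * (u i * u j)
      = ∑ i, ∑ j, m i i * (u i * u j) := by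
    have expand : ∀ i j : Fin d, (m i i + m j j) / 2 * (u i * u j)
        = m i i / 2 * (u i * u j) + m j j / 2 * (u i * u j) := fun i j => by ring
    calc ∑ i, ∑ j, (m i i + m j j) / 2 * (u i * u j)
        = (∑ i, ∑ j, m i i / 2 * (u i * u j)) + (∑ i, ∑ j, m j j / 2 * (u i * u j)) := by
          simp only [expand, Finset.sum_add_distrib]
      _ = (∑ i, ∑ j, m i i / 2 * (u i * u j)) + (∑ i, ∑ j, m i i / 2 * (u i * u j)) := by
          rw [hcomm]
      _ = ∑ i, ∑ j, m i i * (u i * u j) := by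
          rw [← Finset.sum_add_distrib]
          refine Finset.sum_congr rfl fun i _ => ?_
          rw [← Finset.sum_add_distrib]
          exact Finset.sum_congr rfl fun j _ => by ring
  have step3 : ∑ i, ∑ j, m i i * (u i * u j)
      ≤ ∑ _i : Fin d, ∑ _j : Fin d, m _i _i * (‖x‖ * ‖x‖) := by
    apply Finset.sum_le_sum; intro i _
    apply Finset.sum_le_sum; intro j _
    have := hdiag i
    have h1 : u i * u j ≤ ‖x‖ * ‖x‖ :=
      mul_le_mul (hun i) (hun j) (hu0 j) (norm_nonneg x)
    exact mul_le_mul_of_nonneg_left h1 this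
  have step4 : ∑ _i : Fin d, ∑ _j : Fin d, m _i _i * (‖x‖ * ‖x‖) = d * (∑ i, m i i) * ‖x‖^2 := by
    simp only [Finset.sum_const, Finset.card_univ, Fintype.card_fin, nsmul_eq_mul,
      ← Finset.sum_mul]
    rw [mul_comm (d:ℝ) (∑ i, m i i), Finset.sum_mul, Finset.sum_mul]
    exact Finset.sum_congr rfl fun k _ => by ring
  calc quadForm m x ≤ _ := step1
    _ = _ := step2
    _ ≤ _ := step3
    _ = _ := step4

lemma lop_lam (a : Euc d → Matrix (Fin d) (Fin d) ℝ) (b : Euc d → Euc d)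
    (K α : ℝ) {x : Euc d} (hx : x ≠ 0) :
    Lop a b (fun y => Real.exp (-(K * ‖y‖ ^ α))) x =
      Real.exp (-(K * ‖x‖ ^ α)) *
        (((K*α)^2 * (‖x‖^(α-2) * ‖x‖^(α-2)) - (K*α)*(α-2) * ‖x‖^(α-4)) * quadForm (a x) x
          - (K*α) * ‖x‖^(α-2) * ((∑ i, a x i i) + (∑ i, b x i * x i))) := by
  unfold Lop quadForm
  simp only [pd2_lam K α hx, pd_lam K α hx]
  have hrow : ∀ i : Fin d, ∑ j, a x i j * (Real.exp (-(K * ‖x‖ ^ α)) *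
        ((((K*α)^2 * (‖x‖ ^ (α-2) * ‖x‖ ^ (α-2)) - (K*α)*(α-2) * ‖x‖ ^ (α-4)) * (x i * x j))
          - (K*α) * ‖x‖ ^ (α-2) * (if j = i then 1 else 0)))
      = Real.exp (-(K * ‖x‖ ^ α)) *
          ((K*α)^2 * (‖x‖ ^ (α-2) * ‖x‖ ^ (α-2)) - (K*α)*(α-2) * ‖x‖ ^ (α-4)) *
          (∑ j, a x i j * x i * x j)
        - Real.exp (-(K * ‖x‖ ^ α)) * ((K*α) * ‖x‖ ^ (α-2)) * a x i i := by
    intro i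
    calc ∑ j, a x i j * (Real.exp (-(K * ‖x‖ ^ α)) *
          ((((K*α)^2 * (‖x‖ ^ (α-2) * ‖x‖ ^ (α-2)) - (K*α)*(α-2) * ‖x‖ ^ (α-4)) * (x i * x j))
            - (K*α) * ‖x‖ ^ (α-2) * (if j = i then 1 else 0)))
        = ∑ j, (Real.exp (-(K * ‖x‖ ^ α)) *
            ((K*α)^2 * (‖x‖ ^ (α-2) * ‖x‖ ^ (α-2)) - (K*α)*(α-2) * ‖x‖ ^ (α-4)) *
            (a x i j * x i * x j)
          - (if j = i then Real.exp (-(K * ‖x‖ ^ α)) * ((K*α) * ‖x‖ ^ (α-2)) * a x i j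
              else 0)) := by
          refine Finset.sum_congr rfl fun j _ => ?_
          split <;> ring
      _ = _ := by
          rw [Finset.sum_sub_distrib, ← Finset.mul_sum,
            Finset.sum_ite_eq' Finset.univ i
              (fun j => Real.exp (-(K * ‖x‖ ^ α)) * ((K*α) * ‖x‖ ^ (α-2)) * a x i j)]
          simp
  rw [Finset.sum_congr rfl (fun i _ => hrow i), Finset.sum_sub_distrib,
    ← Finset.mul_sum, ← Finset.mul_sum]
  have hbterm : ∑ i, b x i * (-(K * α) * ‖x‖ ^ (α - 2) * Real.exp (-(K * ‖x‖ ^ α)) * x i)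
      = -(Real.exp (-(K * ‖x‖ ^ α)) * ((K*α) * ‖x‖ ^ (α-2)) * ∑ i, b x i * x i) := by
    rw [Finset.mul_sum, ← Finset.sum_neg_distrib]
    exact Finset.sum_congr rfl fun i _ => by ring
  rw [hbterm]
  ring

end Aux

set_option maxHeartbeats 1000000 in
/-- Lemma 4.1 (differential inequality part): `𝓛Λ ≥ γ|x|^{2α-2}Λ` for large `|x|`, where
`Λ(x) = exp(-K|x|^α)`. -/

theorem statement11 {d : ℕ} (hd : 1 ≤ d)
    (a : Euc d → Matrix (Fin d) (Fin d) ℝ) (b : Euc d → Euc d)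
    (hposdef : ∀ x, (a x).PosDef)
    (M η₀ β : ℝ) (hM : 0 < M) (hη : 0 < η₀) (hβ0 : 0 ≤ β) (hβ2 : β ≤ 2)
    (R₁ : ℝ) (hR₁ : 0 < R₁)
    (hb : ∀ x : Euc d, R₁ ≤ ‖x‖ → |∑ i, b x i * x i| ≤ M * ‖x‖ ^ β)
    (ha : ∀ x : Euc d, R₁ ≤ ‖x‖ → ∀ ξ : Euc d, η₀ * ‖ξ‖ ^ 2 ≤ quadForm (a x) ξ)
    (α : ℝ) (hα : β ≤ α) (K γ : ℝ) (hK : 0 < K) (hγ : 0 < γ)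
    (hKα : M / (2 * η₀) + Real.sqrt (M ^ 2 / (4 * η₀ ^ 2) + γ / η₀) < K * α)
    (htrace : Tendsto (fun x : Euc d => (∑ i, a x i i) / ‖x‖ ^ α)
      (cocompact (Euc d)) (nhds 0)) :
    ∃ r₀ : ℝ, 1 ≤ r₀ ∧ ∀ x : Euc d, r₀ ≤ ‖x‖ →
      γ * ‖x‖ ^ (2 * α - 2) * Real.exp (-(K * ‖x‖ ^ α)) ≤
        Lop a b (fun y => Real.exp (-(K * ‖y‖ ^ α))) x := by

  classical
  have hrt : 0 < K * α := by
    have h1 : 0 ≤ M / (2 * η₀) := by positivity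
    have h2 : 0 ≤ Real.sqrt (M ^ 2 / (4 * η₀ ^ 2) + γ / η₀) := Real.sqrt_nonneg _
    linarith
  have hα0 : 0 < α := by nlinarith
  set t := K * α with hts
  have hδ : 0 < η₀ * t ^ 2 - M * t - γ := by
    set s := Real.sqrt (M ^ 2 / (4 * η₀ ^ 2) + γ / η₀) with hsdef
    have hs0 : 0 ≤ s := Real.sqrt_nonneg _
    have hsq : s ^ 2 = M ^ 2 / (4 * η₀ ^ 2) + γ / η₀ :=
      Real.sq_sqrt (by positivity)
    have hs2 : 4 * η₀ ^ 2 * s ^ 2 = M ^ 2 + 4 * η₀ * γ := by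
      rw [hsq]; field_simp
    have hKα' : M + 2 * η₀ * s < 2 * η₀ * t := by
      have h := mul_lt_mul_of_pos_left hKα (show (0:ℝ) < 2 * η₀ by positivity)
      have : 2 * η₀ * (M / (2 * η₀) + s) = M + 2 * η₀ * s := by field_simp
      linarith [this ▸ h]
    have h3 : 0 < 2 * η₀ * t - (M + 2 * η₀ * s) := by linarith
    have h4 : 0 < 2 * η₀ * t - M + 2 * η₀ * s := by nlinarith
    nlinarith [mul_pos h3 h4, hs2, hη]
  set ε₀ := (η₀ * t ^ 2 - M * t - γ) / (t * (|α - 2| * d + 1)) with hεdef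
  have hden : 0 < t * (|α - 2| * (d:ℝ) + 1) := by positivity
  have hε₀ : 0 < ε₀ := div_pos hδ hden
  have hεeq : t * (|α - 2| * (d:ℝ) + 1) * ε₀ = η₀ * t ^ 2 - M * t - γ := by
    rw [hεdef]
    field_simp
  have hmem : (fun y : Euc d => (∑ i, a y i i) / ‖y‖ ^ α) ⁻¹' (Set.Iio ε₀)
      ∈ cocompact (Euc d) := htrace (Iio_mem_nhds hε₀)
  rcases mem_cocompact.mp hmem with ⟨Kc, hKc, hsub⟩
  obtain ⟨R, hsubR⟩ := hKc.isBounded.subset_closedBall (0 : Euc d)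
  refine ⟨max (max 1 R₁) (R + 1), le_trans (le_max_left 1 R₁) (le_max_left _ _), ?_⟩
  intro x hxr
  have hr1 : 1 ≤ ‖x‖ := le_trans (le_trans (le_max_left 1 R₁) (le_max_left _ _)) hxr
  have hrR₁ : R₁ ≤ ‖x‖ := le_trans (le_trans (le_max_right 1 R₁) (le_max_left _ _)) hxr
  have hrR : R < ‖x‖ := by
    have := le_trans (le_max_right (max 1 R₁) (R + 1)) hxr
    linarith
  have hr : 0 < ‖x‖ := lt_of_lt_of_le one_pos hr1
  have hx0 : x ≠ 0 := fun h => by rw [h, norm_zero] at hr; exact lt_irrefl 0 hr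
  have hxK : x ∉ Kc := fun h => by
    have := mem_closedBall_zero_iff.mp (hsubR h)
    linarith
  have hT : (∑ i, a x i i) / ‖x‖ ^ α < ε₀ := hsub hxK
  rw [lop_lam a b K α hx0]
  set r := ‖x‖ with hrdef
  set T := ∑ i, a x i i with hTdef
  set B := ∑ i, b x i * x i with hBdef
  set Q := quadForm (a x) x with hQdef
  have hrα : 0 < r ^ α := Real.rpow_pos_of_pos hr α
  have hTub : T ≤ ε₀ * r ^ α := by
    rw [div_lt_iff₀ hrα] at hT
    linarith
  have hsym : ∀ i j, a x i j = a x j i := by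
    intro i j
    simpa using ((hposdef x).1.apply i j).symm
  have hq0 : ∀ ξ : Euc d, 0 ≤ quadForm (a x) ξ := fun ξ =>
    le_trans (by positivity) (ha x hrR₁ ξ)
  have hQlb : η₀ * r ^ 2 ≤ Q := ha x hrR₁ x
  have hQub : Q ≤ (d:ℝ) * T * r ^ 2 := quad_le_trace (a x) hsym hq0 x
  have hQ0 : 0 ≤ Q := hq0 x
  have hT0 : 0 ≤ T := by
    apply Finset.sum_nonneg
    intro i _
    have h := ha x hrR₁ (EuclideanSpace.single i 1)
    rw [quadForm_single] at h
    have : ‖(EuclideanSpace.single i 1 : Euc d)‖ = 1 := by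
      simp [EuclideanSpace.norm_single]
    rw [this] at h
    nlinarith
  have hBub : |B| ≤ M * r ^ α := by
    have h1 := hb x hrR₁
    have h2 : r ^ β ≤ r ^ α := Real.rpow_le_rpow_of_exponent_le hr1 hα
    calc |B| ≤ M * r ^ β := h1
      _ ≤ M * r ^ α := mul_le_mul_of_nonneg_left h2 hM.le
  set P2 := r ^ (α - 2) with hP2def
  set P4 := r ^ (α - 4) with hP4def
  set Pα := r ^ α with hPαdef
  set P22 := r ^ (2 * α - 2) with hP22def
  have hP2 : 0 ≤ P2 := (Real.rpow_pos_of_pos hr _).le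
  have hP4 : 0 ≤ P4 := (Real.rpow_pos_of_pos hr _).le
  have hP22 : 0 ≤ P22 := (Real.rpow_pos_of_pos hr _).le
  have f1 : P2 * P2 * r ^ 2 = P22 := by
    rw [hP2def, hP22def, ← Real.rpow_natCast r 2, ← Real.rpow_add hr, ← Real.rpow_add hr]
    congr 1
    push_cast; ring
  have f2 : P4 * Pα * r ^ 2 = P22 := by
    rw [hP4def, hP22def, hPαdef, ← Real.rpow_natCast r 2, ← Real.rpow_add hr,
      ← Real.rpow_add hr]
    congr 1
    push_cast; ring
  have f3 : P2 * Pα = P22 := by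
    rw [hP2def, hP22def, hPαdef, ← Real.rpow_add hr]
    congr 1
    ring
  have habs : α - 2 ≤ |α - 2| := le_abs_self _
  clear_value t ε₀ r T B Q P2 P4 Pα P22
  have k1 : t ^ 2 * η₀ * P22 ≤ t ^ 2 * (P2 * P2) * Q := by
    have h := mul_le_mul_of_nonneg_left hQlb
      (show (0:ℝ) ≤ t ^ 2 * (P2 * P2) by positivity)
    calc t ^ 2 * η₀ * P22 = t ^ 2 * (P2 * P2) * (η₀ * r ^ 2) := by rw [← f1]; ring
      _ ≤ t ^ 2 * (P2 * P2) * Q := h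
  have k2 : t * (α - 2) * P4 * Q ≤ t * |α - 2| * (d:ℝ) * ε₀ * P22 := by
    have s1 : t * (α - 2) * P4 * Q ≤ t * |α - 2| * P4 * Q := by
      have h6 : 0 ≤ P4 * Q := mul_nonneg hP4 hQ0
      have h5 : t * (α - 2) ≤ t * |α - 2| := mul_le_mul_of_nonneg_left habs hrt.le
      calc t * (α - 2) * P4 * Q = (t * (α - 2)) * (P4 * Q) := by ring
        _ ≤ (t * |α - 2|) * (P4 * Q) := mul_le_mul_of_nonneg_right h5 h6
        _ = t * |α - 2| * P4 * Q := by ring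
    have s2 : t * |α - 2| * P4 * Q ≤ t * |α - 2| * P4 * ((d:ℝ) * T * r ^ 2) := by
      apply mul_le_mul_of_nonneg_left hQub
      positivity
    have s3 : t * |α - 2| * P4 * ((d:ℝ) * T * r ^ 2)
        ≤ t * |α - 2| * P4 * ((d:ℝ) * (ε₀ * Pα) * r ^ 2) := by
      apply mul_le_mul_of_nonneg_left _
        (mul_nonneg (mul_nonneg hrt.le (abs_nonneg _)) hP4)
      have h7 : (d:ℝ) * T ≤ (d:ℝ) * (ε₀ * Pα) :=
        mul_le_mul_of_nonneg_left hTub (Nat.cast_nonneg d)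
      exact mul_le_mul_of_nonneg_right h7 (sq_nonneg r)
    have s4 : t * |α - 2| * P4 * ((d:ℝ) * (ε₀ * Pα) * r ^ 2)
        = t * |α - 2| * (d:ℝ) * ε₀ * P22 := by
      rw [← f2]; ring
    linarith
  have k3 : t * P2 * T ≤ t * ε₀ * P22 := by
    have h := mul_le_mul_of_nonneg_left hTub (show (0:ℝ) ≤ t * P2 by positivity)
    calc t * P2 * T = t * P2 * T := rfl
      _ ≤ t * P2 * (ε₀ * Pα) := h
      _ = t * ε₀ * P22 := by rw [← f3]; ring
  have k4 : t * P2 * B ≤ t * M * P22 := by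
    have h1 : B ≤ |B| := le_abs_self _
    have h2 : t * P2 * B ≤ t * P2 * (M * Pα) := by
      apply mul_le_mul_of_nonneg_left _ (mul_nonneg hrt.le hP2)
      exact le_trans h1 hBub
    calc t * P2 * B ≤ t * P2 * (M * Pα) := h2
      _ = t * M * P22 := by rw [← f3]; ring
  have hscal : t ^ 2 * η₀ - t * |α - 2| * (d:ℝ) * ε₀ - t * ε₀ - t * M = γ := by
    have : t * |α - 2| * (d:ℝ) * ε₀ + t * ε₀ = η₀ * t ^ 2 - M * t - γ := by
      calc t * |α - 2| * (d:ℝ) * ε₀ + t * ε₀ = t * (|α - 2| * (d:ℝ) + 1) * ε₀ := by ring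
        _ = η₀ * t ^ 2 - M * t - γ := hεeq
    linarith
  have key : γ * P22 ≤ (t ^ 2 * (P2 * P2) - t * (α - 2) * P4) * Q - t * P2 * (T + B) := by
    have expand : (t ^ 2 * (P2 * P2) - t * (α - 2) * P4) * Q - t * P2 * (T + B)
        = t ^ 2 * (P2 * P2) * Q - t * (α - 2) * P4 * Q - t * P2 * T - t * P2 * B := by
      ring
    rw [expand, ← hscal]
    have lhs_eq : (t ^ 2 * η₀ - t * |α - 2| * (d:ℝ) * ε₀ - t * ε₀ - t * M) * P22
        = t ^ 2 * η₀ * P22 - t * |α - 2| * (d:ℝ) * ε₀ * P22 - t * ε₀ * P22 - t * M * P22 := by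
      ring
    rw [lhs_eq]
    linarith [k1, k2, k3, k4]
  have hexp : (0:ℝ) < Real.exp (-(K * Pα)) := Real.exp_pos _
  calc γ * P22 * Real.exp (-(K * Pα))
      = Real.exp (-(K * Pα)) * (γ * P22) := by ring
    _ ≤ Real.exp (-(K * Pα)) *
        ((t ^ 2 * (P2 * P2) - t * (α - 2) * P4) * Q - t * P2 * (T + B)) :=
      mul_le_mul_of_nonneg_left key hexp.le
    _ = _ := by rw [hts]
end
end

section
/- Let a : ℝ^d → (symmetric positive definite d×d real matrices) be locally Lipschitz, bounded, with ⟨ξ, a(x)ξ⟩ ≥ η₀|ξ|² for all x, ξ (some η₀ > 0). Let 𝒜₁, 𝒜₂ be compact metric spaces and let b : ℝ^d × 𝒜₁ × 𝒜₂ → ℝ^d and V : ℝ^d × 𝒜₁ × 𝒜₂ → ℝ be continuous and bounded. If u is a positive C² function on ℝ^d satisfying, for every x, min_{v₁∈𝒜₁} max_{v₂∈𝒜₂} [ Σ_{i,j} a^{ij}(x) ∂²u(x)/∂x_i∂x_j + ⟨b(x,v₁,v₂), ∇u(x)⟩ + V(x,v₁,v₂) u(x) ] = 0, then there exist constants γ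 > 0 and C_γ > 0 such that u(x) ≥ C_γ e^{−γ|x|} for all sufficiently large |x|. -/
open Metric Set Filter

noncomputable section

open scoped Topology Matrix

variable {d : ℕ}

lemma euc_sum_single (ξ : Euc d) : ξ = ∑ i, ξ i • EuclideanSpace.single i (1:ℝ) := by
  ext j
  rw [WithLp.ofLp_sum, Finset.sum_apply]
  simp [EuclideanSpace.single_apply, Finset.sum_ite_eq']

lemma clm_apply_eq_sum (L : Euc d →L[ℝ] ℝ) (ξ : Euc d) :
    L ξ = ∑ i, ξ i * L (EuclideanSpace.single i 1) := by
  conv_lhs => rw [euc_sum_single ξ]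
  rw [map_sum]
  simp [smul_eq_mul]

/-- one-dimensional second derivative test -/
lemma secondDerivTest1D {g g' : ℝ → ℝ} (hg : ∀ t, HasDerivAt g (g' t) t) {c : ℝ}
    (hg' : HasDerivAt g' c 0) (hmin : IsLocalMin g 0) : 0 ≤ c := by
  by_contra hc
  push_neg at hc
  have h0 : g' 0 = 0 := by
    have := hmin.deriv_eq_zero
    rwa [(hg 0).deriv] at this
  have hslope : Tendsto (fun t => g' t / t) (𝓝[≠] (0:ℝ)) (𝓝 c) := by
    have := hasDerivAt_iff_tendsto_slope.1 hg'
    simpa [slope_fun_def, h0, div_eq_inv_mul] using this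
  have hhalf : ∀ᶠ t in 𝓝[≠] (0:ℝ), g' t / t < c/2 :=
    hslope.eventually_lt_const (by linarith)
  obtain ⟨δ, hδpos, hδ⟩ := Metric.mem_nhdsWithin_iff.1 hhalf
  obtain ⟨ε, hεpos, hε⟩ := Metric.mem_nhds_iff.1 hmin
  set t₀ := min δ ε / 2 with ht₀
  have ht₀pos : 0 < t₀ := by positivity
  have hneg : ∀ t ∈ interior (Icc (0:ℝ) t₀), deriv g t < 0 := by
    intro t ht
    rw [interior_Icc] at ht
    have htδ : t ∈ Metric.ball (0:ℝ) δ ∩ {(0:ℝ)}ᶜ := by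
      constructor
      · simp only [Metric.mem_ball, Real.dist_eq, sub_zero]
        rw [abs_of_pos ht.1]
        calc t < t₀ := ht.2
        _ ≤ δ/2 := by rw [ht₀]; linarith [min_le_left δ ε]
        _ < δ := by linarith
      · exact fun h => absurd h.symm (ne_of_lt ht.1)
    have := hδ htδ
    rw [Set.mem_setOf_eq] at this
    have : g' t < (c/2) * t := by
      rw [div_lt_iff₀ ht.1] at this; linarith
    rw [(hg t).deriv]
    nlinarith [ht.1]
  have hanti : StrictAntiOn g (Icc (0:ℝ) t₀) :=
    strictAntiOn_of_deriv_neg (convex_Icc _ _)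
      (fun t _ => (hg t).differentiableAt.continuousAt.continuousWithinAt) hneg
  have h1 : g t₀ < g 0 :=
    hanti (by constructor <;> [rfl;exact le_of_lt ht₀pos] )
      (by exact ⟨le_of_lt ht₀pos, le_refl _⟩) ht₀pos
  have h2 : g 0 ≤ g t₀ := by
    apply hε
    simp only [Metric.mem_ball, Real.dist_eq, sub_zero]
    rw [abs_of_pos ht₀pos]
    calc t₀ ≤ ε/2 := by rw [ht₀]; linarith [min_le_right δ ε]
    _ < ε := by linarith
  linarith

lemma psd_trace_pair_nonneg {M H : Matrix (Fin d) (Fin d) ℝ} (hM : M.PosSemidef)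
    (hH : H.PosSemidef) : 0 ≤ ∑ i, ∑ j, M i j * H i j := by
  have key : (0:ℝ) ≤ (M * H).trace := by
    classical
    open scoped MatrixOrder in
    have hS : ∃ S : Matrix (Fin d) (Fin d) ℝ, S.PosSemidef ∧ S * S = M :=
      ⟨CFC.sqrt M, Matrix.nonneg_iff_posSemidef.1 (CFC.sqrt_nonneg M), CFC.sqrt_mul_sqrt_self M hM.nonneg⟩
    obtain ⟨S, hs, hSS⟩ := hS
    have h1 : M * H = S * (S * H) := by
      rw [← mul_assoc, hSS]
    have h2 : ((S * H) * S).PosSemidef := by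
      have := hH.mul_mul_conjTranspose_same S
      rwa [hs.isHermitian.eq] at this
    rw [h1, Matrix.trace_mul_comm]
    -- trace of PosSemidef is nonneg
    exact h2.trace_nonneg
  rw [Matrix.trace_mul_comm, Matrix.trace] at key
  have : (H * M).diag = fun i => ∑ j, H i j * M j i := rfl
  rw [this] at key
  calc (0:ℝ) ≤ ∑ i, ∑ j, H i j * M j i := key
  _ = ∑ i, ∑ j, M i j * H i j := by
      rw [Finset.sum_comm]
      refine Finset.sum_congr rfl fun i _ => Finset.sum_congr rfl fun j _ => ?_
      have := hH.isHermitian.apply i j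
      simp only [RCLike.star_def, star_trivial] at this
      rw [← this]; ring

lemma bilin_expand (B : Euc d →L[ℝ] Euc d →L[ℝ] ℝ) (ξ η : Euc d) :
    B ξ η = ∑ i, ∑ j, ξ i * η j *
      B (EuclideanSpace.single i 1) (EuclideanSpace.single j 1) := by
  conv_lhs => rw [euc_sum_single ξ]
  rw [map_sum]
  rw [ContinuousLinearMap.sum_apply]
  refine Finset.sum_congr rfl fun i _ => ?_
  rw [map_smul, ContinuousLinearMap.smul_apply, smul_eq_mul,
    clm_apply_eq_sum (B (EuclideanSpace.single i 1)) η, Finset.mul_sum]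
  refine Finset.sum_congr rfl fun j _ => by ring

lemma pd2_eq_snd {v : Euc d → ℝ} (hv : ContDiff ℝ 2 v) (x₀ : Euc d) (i j : Fin d) :
    pd2 v i j x₀ = fderiv ℝ (fderiv ℝ v) x₀ (EuclideanSpace.single i 1)
      (EuclideanSpace.single j 1) := by
  have hfd : ContDiff ℝ 1 (fderiv ℝ v) := hv.fderiv_right (le_refl 2)
  have hf'' : HasFDerivAt (fderiv ℝ v) (fderiv ℝ (fderiv ℝ v) x₀) x₀ :=
    ((hfd.differentiable one_ne_zero) x₀).hasFDerivAt
  have hc : HasFDerivAt (fun y => pd v j y)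
      ((ContinuousLinearMap.apply ℝ ℝ (EuclideanSpace.single j 1)).comp
        (fderiv ℝ (fderiv ℝ v) x₀)) x₀ :=
    (ContinuousLinearMap.apply ℝ ℝ (EuclideanSpace.single j (1:ℝ))).hasFDerivAt.comp x₀ hf''
  rw [pd2, hc.fderiv]
  rfl

lemma localmin_quad_nonneg {v : Euc d → ℝ} (hv : ContDiff ℝ 2 v) {x₀ : Euc d}
    (hmin : IsLocalMin v x₀) (ξ : Euc d) :
    0 ≤ fderiv ℝ (fderiv ℝ v) x₀ ξ ξ := by
  have hdv : Differentiable ℝ v := hv.differentiable two_ne_zero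
  have hfd : ContDiff ℝ 1 (fderiv ℝ v) := hv.fderiv_right (le_refl 2)
  have hf'' : HasFDerivAt (fderiv ℝ v) (fderiv ℝ (fderiv ℝ v) x₀) x₀ :=
    ((hfd.differentiable one_ne_zero) x₀).hasFDerivAt
  set ℓ : ℝ → Euc d := fun t => x₀ + t • ξ with hℓ
  have hline : ∀ t : ℝ, HasDerivAt ℓ ξ t := by
    intro t
    have := ((hasDerivAt_id t).smul_const ξ).const_add x₀
    exact this.congr_deriv (one_smul _ _)
  have hg : ∀ t, HasDerivAt (fun t => v (ℓ t)) (fderiv ℝ v (ℓ t) ξ) t := fun t =>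
    (hdv (ℓ t)).hasFDerivAt.comp_hasDerivAt t (hline t)
  have hℓ0 : ℓ 0 = x₀ := by simp [hℓ]
  have hg' : HasDerivAt (fun t => fderiv ℝ v (ℓ t) ξ)
      (fderiv ℝ (fderiv ℝ v) x₀ ξ ξ) 0 := by
    have h1 : HasDerivAt (fun t => fderiv ℝ v (ℓ t))
        (fderiv ℝ (fderiv ℝ v) x₀ ξ) 0 := by
      have h0 : HasFDerivAt (fderiv ℝ v) (fderiv ℝ (fderiv ℝ v) x₀) (ℓ 0) := by
        rw [hℓ0]; exact hf''
      have := h0.comp_hasDerivAt 0 (hline 0)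
      exact this
    exact (ContinuousLinearMap.apply ℝ ℝ ξ).hasFDerivAt.comp_hasDerivAt 0 h1
  have hming : IsLocalMin (fun t => v (ℓ t)) 0 := by
    have htends : Tendsto ℓ (𝓝 0) (𝓝 x₀) := by
      have : Continuous ℓ := by continuity
      exact this.tendsto' 0 x₀ hℓ0
    have := htends.eventually hmin
    simpa [IsLocalMin, IsMinFilter, hℓ0] using this
  exact secondDerivTest1D hg hg' hming

lemma localmin_psd {v : Euc d → ℝ} (hv : ContDiff ℝ 2 v) {x₀ : Euc d}
    (hmin : IsLocalMin v x₀) :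
    (Matrix.of fun i j => pd2 v i j x₀).PosSemidef := by
  have hdv : Differentiable ℝ v := hv.differentiable two_ne_zero
  have hfd : ContDiff ℝ 1 (fderiv ℝ v) := hv.fderiv_right (le_refl 2)
  have hf'' : HasFDerivAt (fderiv ℝ v) (fderiv ℝ (fderiv ℝ v) x₀) x₀ :=
    ((hfd.differentiable one_ne_zero) x₀).hasFDerivAt
  have hsymm : ∀ ξ η : Euc d, fderiv ℝ (fderiv ℝ v) x₀ ξ η = fderiv ℝ (fderiv ℝ v) x₀ η ξ :=
    second_derivative_symmetric (fun y => (hdv y).hasFDerivAt) hf''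
  refine Matrix.PosSemidef.of_dotProduct_mulVec_nonneg ?_ ?_
  · ext i j
    simp only [Matrix.conjTranspose_apply, Matrix.of_apply, star_trivial]
    rw [pd2_eq_snd hv, pd2_eq_snd hv, hsymm]
  · intro x
    set ξ : Euc d := (WithLp.equiv 2 (Fin d → ℝ)).symm x with hξ
    have hxi : ∀ i, ξ i = x i := fun i => rfl
    have key := localmin_quad_nonneg hv hmin ξ
    rw [bilin_expand] at key
    simp only [star_trivial]
    calc (0:ℝ) ≤ ∑ i, ∑ j, ξ i * ξ j * fderiv ℝ (fderiv ℝ v) x₀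
          (EuclideanSpace.single i 1) (EuclideanSpace.single j 1) := key
    _ = dotProduct x ((Matrix.of fun i j => pd2 v i j x₀) *ᵥ x) := by
        rw [dotProduct]
        refine Finset.sum_congr rfl fun i _ => ?_
        rw [Matrix.mulVec, dotProduct, Finset.mul_sum]
        refine Finset.sum_congr rfl fun j _ => ?_
        rw [Matrix.of_apply, pd2_eq_snd hv, hxi, hxi]
        ring

/-! ### Barrier function -/

def nsq {d : ℕ} (x : Euc d) : ℝ := ∑ i, (x i)^2

def Dn {d : ℕ} (x : Euc d) : Euc d →L[ℝ] ℝ := ∑ i, (2 * x i) • (EuclideanSpace.proj i)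

lemma nsq_nonneg (x : Euc d) : 0 ≤ nsq x := Finset.sum_nonneg fun i _ => sq_nonneg _

lemma nsq_eq_norm (x : Euc d) : nsq x = ‖x‖^2 := by
  rw [EuclideanSpace.norm_eq, Real.sq_sqrt (Finset.sum_nonneg fun i _ => sq_nonneg _)]
  simp [nsq, Real.norm_eq_abs, sq_abs]

lemma hasFDerivAt_nsq (x : Euc d) : HasFDerivAt nsq (Dn x) x := by
  have : ∀ i : Fin d, HasFDerivAt (fun y : Euc d => (y i)^2) ((2 * x i) • (EuclideanSpace.proj i : Euc d →L[ℝ] ℝ)) x := by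
    intro i
    have h := (hasDerivAt_pow 2 (x i)).comp_hasFDerivAt x
      ((EuclideanSpace.proj i : Euc d →L[ℝ] ℝ).hasFDerivAt (x := x))
    simpa [PiLp.proj_apply, Function.comp_def] using h
  exact HasFDerivAt.fun_sum fun i _ => this i

lemma Dn_single (x : Euc d) (j : Fin d) : Dn x (EuclideanSpace.single j 1) = 2 * x j := by
  rw [Dn, ContinuousLinearMap.sum_apply]
  simp [PiLp.proj_apply, EuclideanSpace.single_apply, Finset.sum_ite_eq]

lemma contDiff_nsq : ContDiff ℝ 2 (nsq (d := d)) := by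
  apply ContDiff.sum
  intro i _
  exact ((EuclideanSpace.proj i : Euc d →L[ℝ] ℝ).contDiff).pow 2

def φ0 (γ t : ℝ) : ℝ := Real.exp (-(γ * Real.sqrt (t+1)))
def φ1 (γ t : ℝ) : ℝ := -(γ / (2 * Real.sqrt (t+1))) * φ0 γ t
def φ2 (γ t : ℝ) : ℝ :=
  (γ / (4*(t+1)*Real.sqrt (t+1)) + γ^2/(4*(t+1))) * φ0 γ t

lemma φ0_pos (γ t : ℝ) : 0 < φ0 γ t := Real.exp_pos _

lemma sqrt_pos_of (t : ℝ) (ht : -1 < t) : 0 < Real.sqrt (t+1) :=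
  Real.sqrt_pos.2 (by linarith)

lemma hasDerivAt_sqrt1 {t : ℝ} (ht : -1 < t) :
    HasDerivAt (fun t => Real.sqrt (t+1)) (1/(2*Real.sqrt (t+1))) t := by
  have h := (Real.hasDerivAt_sqrt (x := t+1) (by linarith)).comp t
    ((hasDerivAt_id t).add_const 1)
  simpa [Function.comp_def] using h

lemma hasDerivAt_φ0 (γ : ℝ) {t : ℝ} (ht : -1 < t) : HasDerivAt (φ0 γ) (φ1 γ t) t := by
  have h1 := ((hasDerivAt_sqrt1 ht).const_mul γ).neg
  have h2 := h1.exp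
  refine h2.congr_deriv ?_
  simp only [φ1, φ0, Pi.neg_apply]
  ring

lemma hasDerivAt_φ1 (γ : ℝ) {t : ℝ} (ht : -1 < t) : HasDerivAt (φ1 γ) (φ2 γ t) t := by
  have hs := sqrt_pos_of t ht
  have hinv : HasDerivAt (fun t => -(γ / (2 * Real.sqrt (t+1))))
      (γ / (4*(t+1)*Real.sqrt (t+1))) t := by
    have h1 : HasDerivAt (fun t => (Real.sqrt (t+1))⁻¹)
        (-(1/(2*Real.sqrt (t+1))) / (Real.sqrt (t+1))^2) t :=
      (hasDerivAt_sqrt1 ht).inv (ne_of_gt hs)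
    have h2 := h1.const_mul (-(γ/2))
    have hfun : (fun t => -(γ / (2 * Real.sqrt (t+1))))
        = fun y => -(γ/2) * (Real.sqrt (y+1))⁻¹ := by
      funext s; field_simp
    rw [hfun]
    refine h2.congr_deriv ?_
    · rw [Real.sq_sqrt (by linarith : (0:ℝ) ≤ t+1)]
      field_simp
      ring
  have := hinv.mul (hasDerivAt_φ0 γ ht)
  refine this.congr_deriv ?_
  simp only [φ2, φ1, φ0]
  set s := Real.sqrt (t+1) with hsdef
  have hsne : s ≠ 0 := ne_of_gt hs
  have ht1 : t + 1 = s^2 := (Real.sq_sqrt (by linarith : (0:ℝ) ≤ t+1)).symm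
  rw [ht1]
  field_simp
  ring

def wfun (γ : ℝ) {d : ℕ} (x : Euc d) : ℝ := φ0 γ (nsq x)

lemma nsq_gt (x : Euc d) : -1 < nsq x := lt_of_lt_of_le (by norm_num) (nsq_nonneg x)

lemma hasFDerivAt_wfun (γ : ℝ) (x : Euc d) :
    HasFDerivAt (wfun γ) (φ1 γ (nsq x) • Dn x) x :=
  (hasDerivAt_φ0 γ (nsq_gt x)).comp_hasFDerivAt x (hasFDerivAt_nsq x)

lemma pd_wfun (γ : ℝ) (x : Euc d) (j : Fin d) :
    pd (wfun γ) j x = φ1 γ (nsq x) * (2 * x j) := by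
  rw [pd, (hasFDerivAt_wfun γ x).fderiv]
  simp [Dn_single]

lemma hasFDerivAt_pdw (γ : ℝ) (x : Euc d) (j : Fin d) :
    HasFDerivAt (fun y : Euc d => φ1 γ (nsq y) * (2 * y j))
      ((φ1 γ (nsq x)) • ((2:ℝ) • (EuclideanSpace.proj j : Euc d →L[ℝ] ℝ))
        + (2 * x j) • (φ2 γ (nsq x) • Dn x)) x := by
  have h1 : HasFDerivAt (fun y : Euc d => φ1 γ (nsq y)) (φ2 γ (nsq x) • Dn x) x :=
    (hasDerivAt_φ1 γ (nsq_gt x)).comp_hasFDerivAt x (hasFDerivAt_nsq x)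
  have h2 : HasFDerivAt (fun y : Euc d => 2 * y j)
      ((2:ℝ) • (EuclideanSpace.proj j : Euc d →L[ℝ] ℝ)) x := by
    have := ((EuclideanSpace.proj j : Euc d →L[ℝ] ℝ).hasFDerivAt (x := x)).const_mul (2:ℝ)
    simpa [PiLp.proj_apply] using this
  exact h1.mul h2

lemma pd2_wfun (γ : ℝ) (x : Euc d) (i j : Fin d) :
    pd2 (wfun γ) i j x = φ2 γ (nsq x) * (2 * x i) * (2 * x j)
      + φ1 γ (nsq x) * (if i = j then 2 else 0) := by
  have hpd : (fun y => pd (wfun γ) j y) = fun y : Euc d => φ1 γ (nsq y) * (2 * y j) := by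
    funext y; exact pd_wfun γ y j
  rw [pd2, hpd, (hasFDerivAt_pdw γ x j).fderiv]
  simp only [ContinuousLinearMap.add_apply, ContinuousLinearMap.smul_apply,
    PiLp.proj_apply, Dn_single, smul_eq_mul, EuclideanSpace.single_apply]
  by_cases h : i = j
  · simp [h]; ring
  · simp [h, Ne.symm h]; ring

lemma contDiff_wfun (γ : ℝ) : ContDiff ℝ 2 (wfun γ (d := d)) := by
  rw [contDiff_iff_contDiffAt]
  intro x
  have hφ : ContDiffAt ℝ 2 (φ0 γ) (nsq x) := by
    have hsqrt : ContDiffAt ℝ 2 (fun t : ℝ => Real.sqrt (t+1)) (nsq x) := by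
      have h1 : ContDiffAt ℝ 2 Real.sqrt (nsq x + 1) :=
        Real.contDiffAt_sqrt (by have := nsq_nonneg x; positivity)
      have h2 : ContDiffAt ℝ 2 (fun t : ℝ => t + 1) (nsq x) :=
        (contDiff_id.add contDiff_const).contDiffAt
      have := h1.comp (nsq x) h2
      simpa [Function.comp_def] using this
    have : ContDiffAt ℝ 2 (fun t : ℝ => -(γ * Real.sqrt (t+1))) (nsq x) :=
      ((hsqrt.const_smul γ).neg)
    have := Real.contDiff_exp.contDiffAt.comp (nsq x) this
    exact this
  have := hφ.comp x (contDiff_nsq.contDiffAt)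
  exact this

-- diagonal entries bounded by frobenius norm
lemma abs_diag_le_frob {m : Matrix (Fin d) (Fin d) ℝ} (i : Fin d) : |m i i| ≤ frob m := by
  rw [frob, ← Real.sqrt_sq_eq_abs]
  apply Real.sqrt_le_sqrt
  calc (m i i)^2 ≤ ∑ j, (m i j)^2 :=
        Finset.single_le_sum (f := fun j => (m i j)^2)
          (fun j _ => sq_nonneg _) (Finset.mem_univ i)
  _ ≤ ∑ i', ∑ j, (m i' j)^2 :=
        Finset.single_le_sum (f := fun i' => ∑ j, (m i' j)^2)
          (fun i' _ => Finset.sum_nonneg fun j _ => sq_nonneg _) (Finset.mem_univ i)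

lemma frob_nonneg (m : Matrix (Fin d) (Fin d) ℝ) : 0 ≤ frob m := Real.sqrt_nonneg _

set_option maxHeartbeats 3000000 in
lemma annulus_key {d : ℕ} (a : Euc d → Matrix (Fin d) (Fin d) ℝ)
    (hposdef : ∀ x, (a x).PosDef) (η₀ Ca Cb CV : ℝ) (hη : 0 < η₀)
    (hellip : ∀ x ξ : Euc d, η₀ * ‖ξ‖ ^ 2 ≤ quadForm (a x) ξ)
    (hCa : ∀ x, frob (a x) ≤ Ca)
    (hCa0 : 0 ≤ Ca) (hCb0 : 0 ≤ Cb) (hCV0 : 0 ≤ CV)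
    (u : Euc d → ℝ) (huC2 : ContDiff ℝ 2 u) (hupos : ∀ x, 0 < u x)
    (Gv : Euc d → Euc d) (hGv_apply : ∀ x i, Gv x i = pd u i x)
    (keyA : ∀ x, (∑ i, ∑ j, a x i j * pd2 u i j x) ≤ Cb * ‖Gv x‖ + CV * u x)
    (m : ℝ) (hmpos : 0 < m) (hsphere : ∀ y : Euc d, ‖y‖ = 1 → m ≤ u y)
    (γ : ℝ) (hγ1 : 1 ≤ γ) (hγkey : γ * (d * Ca + Cb + CV + 1) ≤ γ^2 * η₀ / 2) :
    ∀ ρ : ℝ, 1 < ρ → ∀ z : Euc d, 1 ≤ ‖z‖ → ‖z‖ ≤ ρ →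
      m * (φ0 γ (nsq z) - φ0 γ (ρ^2)) ≤ u z := by
  have hγpos : 0 < γ := lt_of_lt_of_le one_pos hγ1
  intro ρ hρ z hz1 hzρ
  set β := φ0 γ (ρ^2) with hβ
  have hβpos : 0 < β := φ0_pos _ _
  set wm : Euc d → ℝ := fun y => m * (φ0 γ (nsq y) - β) with hwm
  set v : Euc d → ℝ := fun y => u y - wm y with hv
  set A : Set (Euc d) := Metric.closedBall 0 ρ \ Metric.ball 0 1 with hA
  have hAmem : ∀ y : Euc d, y ∈ A ↔ 1 ≤ ‖y‖ ∧ ‖y‖ ≤ ρ := by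
    intro y
    simp only [hA, Set.mem_diff, Metric.mem_closedBall, Metric.mem_ball,
      dist_zero_right, not_lt]
    tauto
  have hAcomp : IsCompact A := (isCompact_closedBall 0 ρ).diff Metric.isOpen_ball
  have hwm2 : ContDiff ℝ 2 wm := by
    have h1 : ContDiff ℝ 2 (fun y : Euc d => φ0 γ (nsq y) - β) :=
      (contDiff_wfun γ).sub contDiff_const
    exact contDiff_const.mul h1
  have hv2 : ContDiff ℝ 2 v := huC2.sub hwm2
  obtain ⟨x₀, hx₀A, hminA⟩ := hAcomp.exists_isMinOn ⟨z, (hAmem z).2 ⟨hz1, hzρ⟩⟩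
    hv2.continuous.continuousOn
  rcases le_or_gt 0 (v x₀) with hvpos | hvneg
  · have := hminA ((hAmem z).2 ⟨hz1, hzρ⟩)
    simp only [hv, hwm] at this ⊢
    linarith [le_trans hvpos this]
  · exfalso
    obtain ⟨hx₀1, hx₀ρ⟩ := (hAmem x₀).1 hx₀A
    -- x₀ is in the open annulus
    have hx₀1' : 1 < ‖x₀‖ := by
      rcases lt_or_eq_of_le hx₀1 with h | h
      · exact h
      · exfalso
        have hsph : x₀ ∈ Metric.sphere (0 : Euc d) 1 := by
          simp [mem_sphere_iff_norm, ← h]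
        have hum : m ≤ u x₀ := hsphere x₀ (by simpa [mem_sphere_iff_norm] using hsph)
        have hφle : φ0 γ (nsq x₀) ≤ 1 := by
          rw [φ0]
          apply Real.exp_le_one_iff.2
          have := Real.sqrt_nonneg (nsq x₀ + 1)
          nlinarith [hγpos]
        have : 0 ≤ v x₀ := by
          simp only [hv, hwm]
          nlinarith
        linarith
    have hx₀ρ' : ‖x₀‖ < ρ := by
      rcases lt_or_eq_of_le hx₀ρ with h | h
      · exact h
      · exfalso
        have : nsq x₀ = ρ^2 := by rw [nsq_eq_norm, h]
        have : v x₀ = u x₀ := by simp [hv, hwm, this, hβ]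
        linarith [hupos x₀]
    -- local minimum
    have hlocmin : IsLocalMin v x₀ := by
      apply hminA.isLocalMin
      have hopen : IsOpen {y : Euc d | 1 < ‖y‖ ∧ ‖y‖ < ρ} := by
        have : {y : Euc d | 1 < ‖y‖ ∧ ‖y‖ < ρ}
            = (Metric.ball (0:Euc d) ρ) ∩ (Metric.closedBall (0:Euc d) 1)ᶜ := by
          ext y
          simp only [Set.mem_setOf_eq, Set.mem_inter_iff, Metric.mem_ball,
            Set.mem_compl_iff, Metric.mem_closedBall, dist_zero_right, not_le]
          tauto
        rw [this]
        exact Metric.isOpen_ball.inter Metric.isClosed_closedBall.isOpen_compl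
      apply Filter.mem_of_superset (hopen.mem_nhds ⟨hx₀1', hx₀ρ'⟩)
      intro y hy
      exact (hAmem y).2 ⟨le_of_lt hy.1, le_of_lt hy.2⟩
    -- second derivative analysis at the interior minimum
    set t₀ := nsq x₀ with ht₀
    have ht₀1 : 1 ≤ t₀ := by
      rw [ht₀, nsq_eq_norm]; nlinarith
    set s : ℝ := Real.sqrt (t₀ + 1) with hsdef
    have hspos : 0 < s := Real.sqrt_pos.2 (by linarith)
    have hs1 : 1 ≤ s := by
      calc (1:ℝ) = Real.sqrt 1 := by simp
      _ ≤ s := Real.sqrt_le_sqrt (by linarith)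
    set E := φ0 γ t₀ with hE
    have hEpos : 0 < E := φ0_pos _ _
    have hφ1eq : φ1 γ t₀ = -(γ / (2*s)) * E := rfl
    have hxs : ‖x₀‖ ≤ s := by
      have h1 : ‖x₀‖ = Real.sqrt t₀ := by
        rw [ht₀, nsq_eq_norm, Real.sqrt_sq (norm_nonneg _)]
      rw [h1, hsdef]
      exact Real.sqrt_le_sqrt (by linarith)
    have hu_diff : Differentiable ℝ u := huC2.differentiable two_ne_zero
    have hwm_fd : ∀ y : Euc d, HasFDerivAt wm (m • (φ1 γ (nsq y) • Dn y)) y := by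
      intro y
      exact ((hasFDerivAt_wfun γ y).sub_const β).const_mul m
    have hfd0 : fderiv ℝ v x₀ = 0 := hlocmin.fderiv_eq_zero
    have hfusplit : ∀ y : Euc d, fderiv ℝ v y = fderiv ℝ u y - m • (φ1 γ (nsq y) • Dn y) := by
      intro y
      rw [hv]
      rw [fderiv_fun_sub (hu_diff y) (hwm_fd y).differentiableAt, (hwm_fd y).fderiv]
    have hpdu : ∀ i, pd u i x₀ = m * (φ1 γ t₀ * (2 * x₀ i)) := by
      intro i
      have h := hfusplit x₀
      rw [hfd0] at h
      have h2 : fderiv ℝ u x₀ = m • (φ1 γ t₀ • Dn x₀) := by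
        rw [← ht₀] at h
        linear_combination (norm := module) -h
      rw [pd, h2]
      simp [Dn_single]
    have hGv_eq : Gv x₀ = (m * (φ1 γ t₀ * 2)) • x₀ := by
      apply PiLp.ext
      intro i
      rw [hGv_apply, hpdu i, PiLp.smul_apply, smul_eq_mul]
      ring
    have hγs : 0 < γ / s := div_pos hγpos hspos
    have hGvnorm : ‖Gv x₀‖ ≤ m * γ * E := by
      rw [hGv_eq, norm_smul, Real.norm_eq_abs]
      have hφ1neg : φ1 γ t₀ ≤ 0 := by
        rw [hφ1eq]
        have h := le_of_lt (mul_pos (div_pos hγpos (by linarith : (0:ℝ) < 2*s)) hEpos)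
        linarith
      have habs : |m * (φ1 γ t₀ * 2)| = m * (γ/s) * E := by
        rw [abs_mul, abs_mul, abs_of_pos hmpos, abs_of_nonpos hφ1neg,
          abs_of_pos (by norm_num : (0:ℝ) < 2), hφ1eq]
        field_simp
      rw [habs]
      have hcoef : 0 ≤ m * (γ/s) * E :=
        mul_nonneg (mul_nonneg (le_of_lt hmpos) (le_of_lt hγs)) (le_of_lt hEpos)
      calc m * (γ/s) * E * ‖x₀‖ ≤ m * (γ/s) * E * s :=
            mul_le_mul_of_nonneg_left hxs hcoef
      _ = m * γ * E := by field_simp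
    -- u(x₀) is smaller than the barrier
    have hux₀ : u x₀ ≤ m * E := by
      have : v x₀ = u x₀ - m * (E - β) := rfl
      nlinarith
    -- second-order splitting
    have hpduj_diff : ∀ j, DifferentiableAt ℝ (fun y => pd u j y) x₀ := by
      intro j
      have h1 : DifferentiableAt ℝ (fderiv ℝ u) x₀ :=
        ((huC2.fderiv_right (le_refl 2)).differentiable one_ne_zero) x₀
      exact ((ContinuousLinearMap.apply ℝ ℝ
        (EuclideanSpace.single j (1:ℝ))).differentiable.differentiableAt).comp x₀ h1
    have hpdv_eq : ∀ j, (fun y => pd v j y)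
        = fun y => pd u j y - m * (φ1 γ (nsq y) * (2 * y j)) := by
      intro j
      funext y
      rw [pd, hfusplit y]
      simp only [ContinuousLinearMap.sub_apply, ContinuousLinearMap.smul_apply,
        Dn_single, smul_eq_mul, pd]
    have hpd2split : ∀ i j, pd2 u i j x₀ = pd2 v i j x₀ + m * pd2 (wfun γ) i j x₀ := by
      intro i j
      have hw_fd := (hasFDerivAt_pdw γ x₀ j).const_mul m
      have hsub : HasFDerivAt (fun y => pd u j y - m * (φ1 γ (nsq y) * (2 * y j)))
          (fderiv ℝ (fun y => pd u j y) x₀ -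
            m • (φ1 γ (nsq x₀) • ((2:ℝ) • (EuclideanSpace.proj j : Euc d →L[ℝ] ℝ))
              + (2 * x₀ j) • (φ2 γ (nsq x₀) • Dn x₀))) x₀ :=
        (hpduj_diff j).hasFDerivAt.sub hw_fd
      have h2 : pd2 v i j x₀ = pd2 u i j x₀ - m * pd2 (wfun γ) i j x₀ := by
        rw [pd2, hpdv_eq j, hsub.fderiv]
        have hwf : pd2 (wfun γ) i j x₀
            = (φ1 γ (nsq x₀) • ((2:ℝ) • (EuclideanSpace.proj j : Euc d →L[ℝ] ℝ))
              + (2 * x₀ j) • (φ2 γ (nsq x₀) • Dn x₀)) (EuclideanSpace.single i 1) := by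
          rw [pd2]
          have : (fun y => pd (wfun γ) j y) = fun y : Euc d => φ1 γ (nsq y) * (2 * y j) :=
            funext fun y => pd_wfun γ y j
          rw [this, (hasFDerivAt_pdw γ x₀ j).fderiv]
        rw [hwf]
        simp only [ContinuousLinearMap.sub_apply, ContinuousLinearMap.smul_apply,
          smul_eq_mul]
        rw [pd2]
      linarith [h2]
    -- positivity of the Hessian part
    have hpsd : 0 ≤ ∑ i, ∑ j, a x₀ i j * pd2 v i j x₀ := by
      have := psd_trace_pair_nonneg (hposdef x₀).posSemidef (localmin_psd hv2 hlocmin)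
      simpa using this
    -- the barrier's second-order term
    set Q := ∑ i, ∑ j, a x₀ i j * x₀ i * x₀ j with hQdef
    set T := ∑ i, a x₀ i i with hT
    have hterm : ∀ i j, a x₀ i j * pd2 (wfun γ) i j x₀
        = 4 * φ2 γ t₀ * (a x₀ i j * x₀ i * x₀ j)
          + a x₀ i j * (φ1 γ t₀ * (if i = j then 2 else 0)) := by
      intro i j
      rw [pd2_wfun, ← ht₀, mul_add]
      congr 1
      ring
    have hSw : ∑ i, ∑ j, a x₀ i j * pd2 (wfun γ) i j x₀
        = 4 * φ2 γ t₀ * Q + 2 * φ1 γ t₀ * T := by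
      calc ∑ i, ∑ j, a x₀ i j * pd2 (wfun γ) i j x₀
          = ∑ i, ∑ j, (4 * φ2 γ t₀ * (a x₀ i j * x₀ i * x₀ j)
            + a x₀ i j * (φ1 γ t₀ * (if i = j then 2 else 0))) :=
          Finset.sum_congr rfl fun i _ => Finset.sum_congr rfl fun j _ => hterm i j
      _ = (∑ i, ∑ j, 4 * φ2 γ t₀ * (a x₀ i j * x₀ i * x₀ j))
          + ∑ i, ∑ j, a x₀ i j * (φ1 γ t₀ * (if i = j then 2 else 0)) := by
          rw [← Finset.sum_add_distrib]
          exact Finset.sum_congr rfl fun i _ => by rw [← Finset.sum_add_distrib]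
      _ = 4 * φ2 γ t₀ * Q + 2 * φ1 γ t₀ * T := by
          congr 1
          · rw [hQdef, Finset.mul_sum]
            exact Finset.sum_congr rfl fun i _ => by rw [Finset.mul_sum]
          · rw [hT, Finset.mul_sum]
            refine Finset.sum_congr rfl fun i _ => ?_
            rw [Finset.sum_eq_single i]
            · simp; ring
            · intro j _ hji
              simp [Ne.symm hji]
            · intro h
              exact absurd (Finset.mem_univ i) h
    -- lower bounds
    have hellip' : η₀ * t₀ ≤ Q := by
      have h := hellip x₀ x₀
      rw [quadForm] at h
      rw [hQdef, ht₀, nsq_eq_norm]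
      exact h
    have hQ0 : 0 ≤ Q := le_trans (by nlinarith) hellip'
    have hdCa0 : (0:ℝ) ≤ (d:ℝ) * Ca := mul_nonneg (Nat.cast_nonneg d) hCa0
    have hTbound : |T| ≤ (d:ℝ) * Ca := by
      rw [hT]
      calc |∑ i, a x₀ i i| ≤ ∑ i, |a x₀ i i| := Finset.abs_sum_le_sum_abs _ _
      _ ≤ ∑ _i : Fin d, Ca :=
          Finset.sum_le_sum fun i _ => le_trans (abs_diag_le_frob i) (hCa x₀)
      _ = (d:ℝ) * Ca := by
          rw [Finset.sum_const, Finset.card_univ, Fintype.card_fin, nsmul_eq_mul]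
    have hφ2low : γ^2/(4*(t₀+1)) * E ≤ φ2 γ t₀ := by
      have heq : φ2 γ t₀ = (γ / (4*(t₀+1)*s) + γ^2/(4*(t₀+1))) * E := rfl
      rw [heq]
      have h1 : 0 ≤ γ / (4*(t₀+1)*s) :=
        le_of_lt (div_pos hγpos (by nlinarith))
      nlinarith
    have hφ2low0 : 0 ≤ γ^2/(4*(t₀+1)) * E := by
      have := sq_nonneg γ
      have h2 : (0:ℝ) < 4*(t₀+1) := by linarith
      positivity
    have h4 : 4 * (γ^2/(4*(t₀+1)) * E * (η₀ * t₀)) ≤ 4 * (φ2 γ t₀ * Q) := by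
      have := mul_le_mul hφ2low hellip' (by nlinarith) (le_trans hφ2low0 hφ2low)
      linarith
    have hfrac : γ^2*η₀/2 * E ≤ 4 * (γ^2/(4*(t₀+1)) * E * (η₀ * t₀)) := by
      rw [show 4 * (γ^2/(4*(t₀+1)) * E * (η₀ * t₀)) = γ^2*η₀*t₀/(t₀+1) * E by
        field_simp]
      apply mul_le_mul_of_nonneg_right _ hEpos.le
      rw [div_le_div_iff₀ (by norm_num) (by linarith)]
      nlinarith [mul_pos (mul_pos hγpos hγpos) hη]
    have hT' := (abs_le.1 hTbound).2
    have hγsle : γ/s ≤ γ := by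
      rw [div_le_iff₀ hspos]
      nlinarith
    have h2T : -(γ * ((d:ℝ)*Ca)) * E ≤ 2 * φ1 γ t₀ * T := by
      rw [hφ1eq, show 2 * (-(γ/(2*s))*E) * T = -((γ/s)*E*T) by
        field_simp]
      have e1 : (γ/s)*E*T ≤ (γ/s)*E*((d:ℝ)*Ca) :=
        mul_le_mul_of_nonneg_left hT' (mul_nonneg hγs.le hEpos.le)
      have e2 : (γ/s)*E*((d:ℝ)*Ca) ≤ γ*E*((d:ℝ)*Ca) :=
        mul_le_mul_of_nonneg_right (mul_le_mul_of_nonneg_right hγsle hEpos.le) hdCa0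
      nlinarith
    -- assemble
    have hsumsplit : ∑ i, ∑ j, a x₀ i j * pd2 u i j x₀
        = (∑ i, ∑ j, a x₀ i j * pd2 v i j x₀)
          + m * ∑ i, ∑ j, a x₀ i j * pd2 (wfun γ) i j x₀ := by
      rw [Finset.mul_sum, ← Finset.sum_add_distrib]
      refine Finset.sum_congr rfl fun i _ => ?_
      rw [Finset.mul_sum, ← Finset.sum_add_distrib]
      refine Finset.sum_congr rfl fun j _ => ?_
      rw [hpd2split i j]
      ring
    have hSulow : m * ((γ^2*η₀/2 - γ*((d:ℝ)*Ca)) * E)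
        ≤ ∑ i, ∑ j, a x₀ i j * pd2 u i j x₀ := by
      rw [hsumsplit, hSw]
      have hw : (γ^2*η₀/2 - γ*((d:ℝ)*Ca)) * E ≤ 4 * φ2 γ t₀ * Q + 2 * φ1 γ t₀ * T := by
        linarith [h4, hfrac, h2T]
      linarith [hpsd, mul_le_mul_of_nonneg_left hw hmpos.le]
    have hSuup : ∑ i, ∑ j, a x₀ i j * pd2 u i j x₀ ≤ Cb * (m*γ*E) + CV * (m*E) := by
      calc ∑ i, ∑ j, a x₀ i j * pd2 u i j x₀ ≤ Cb * ‖Gv x₀‖ + CV * u x₀ := keyA x₀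
      _ ≤ Cb * (m*γ*E) + CV * (m*E) := by
          have := mul_le_mul_of_nonneg_left hGvnorm hCb0
          have := mul_le_mul_of_nonneg_left hux₀ hCV0
          linarith
    have hfinal2 : γ^2*η₀/2 ≤ γ*((d:ℝ)*Ca) + Cb*γ + CV := by
      have harr : (m*E)*(γ^2*η₀/2 - γ*((d:ℝ)*Ca)) ≤ (m*E)*(Cb*γ + CV) := by
        linarith [hSulow, hSuup]
      have := le_of_mul_le_mul_left harr (mul_pos hmpos hEpos)
      linarith
    linarith [hγkey, hfinal2, hγpos, mul_nonneg (sub_nonneg.2 hγ1) hCV0]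


set_option maxHeartbeats 4000000 in
/-- Corollary 4.2 (b): exponential lower bound for positive solutions of the Isaacs
min-max equation. -/
theorem statement15 {d : ℕ} (hd : 1 ≤ d)
    (A₁ A₂ : Type*) [MetricSpace A₁] [CompactSpace A₁] [Nonempty A₁]
    [MetricSpace A₂] [CompactSpace A₂] [Nonempty A₂]
    (a : Euc d → Matrix (Fin d) (Fin d) ℝ)
    (hposdef : ∀ x, (a x).PosDef)
    (haLip : ∀ R > 0, ∃ C > 0, ∀ x y : Euc d, ‖x‖ ≤ R → ‖y‖ ≤ R →
      frob (a x - a y) ≤ C * ‖x - y‖)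
    (habdd : ∃ Ca, ∀ x, frob (a x) ≤ Ca)
    (η₀ : ℝ) (hη : 0 < η₀)
    (hellip : ∀ x : Euc d, ∀ ξ : Euc d, η₀ * ‖ξ‖ ^ 2 ≤ quadForm (a x) ξ)
    (b : Euc d → A₁ → A₂ → Euc d) (V : Euc d → A₁ → A₂ → ℝ)
    (hbcont : Continuous (fun p : Euc d × A₁ × A₂ => b p.1 p.2.1 p.2.2))
    (hVcont : Continuous (fun p : Euc d × A₁ × A₂ => V p.1 p.2.1 p.2.2))
    (hbbdd : ∃ C, ∀ x v₁ v₂, ‖b x v₁ v₂‖ ≤ C)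
    (hVbdd : ∃ C, ∀ x v₁ v₂, |V x v₁ v₂| ≤ C)
    (u : Euc d → ℝ) (huC2 : ContDiff ℝ 2 u) (hupos : ∀ x, 0 < u x)
    (hsol : ∀ x : Euc d, (⨅ v₁ : A₁, ⨆ v₂ : A₂,
      ((∑ i, ∑ j, a x i j * pd2 u i j x) + (∑ i, b x v₁ v₂ i * pd u i x) +
        V x v₁ v₂ * u x)) = 0) :
    ∃ γ > 0, ∃ C > 0, ∃ R, ∀ x : Euc d, R ≤ ‖x‖ →
      C * Real.exp (-(γ * ‖x‖)) ≤ u x := by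
  classical
  obtain ⟨Ca, hCa⟩ := habdd
  obtain ⟨Cb, hCb⟩ := hbbdd
  obtain ⟨CV, hCV⟩ := hVbdd
  have hCa0 : 0 ≤ Ca := le_trans (frob_nonneg _) (hCa 0)
  have hCb0 : 0 ≤ Cb := le_trans (norm_nonneg _) (hCb 0 (Classical.arbitrary _) (Classical.arbitrary _))
  have hCV0 : 0 ≤ CV := le_trans (abs_nonneg _) (hCV 0 (Classical.arbitrary _) (Classical.arbitrary _))
  -- gradient vector
  set Gv : Euc d → Euc d := fun x => (WithLp.equiv 2 (Fin d → ℝ)).symm (fun i => pd u i x)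
    with hGvdef
  have hGv_apply : ∀ x i, Gv x i = pd u i x := fun x i => rfl
  -- Step A: the differential inequality satisfied by u
  have keyA : ∀ x : Euc d, (∑ i, ∑ j, a x i j * pd2 u i j x) ≤ Cb * ‖Gv x‖ + CV * u x := by
    intro x
    set S := ∑ i, ∑ j, a x i j * pd2 u i j x with hS
    set F : A₁ → A₂ → ℝ := fun v₁ v₂ =>
      S + (∑ i, b x v₁ v₂ i * pd u i x) + V x v₁ v₂ * u x with hF
    have hinner : ∀ v₁ v₂, (∑ i, b x v₁ v₂ i * pd u i x) = inner ℝ (b x v₁ v₂) (Gv x) := by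
      intro v₁ v₂
      rw [PiLp.inner_apply]
      refine Finset.sum_congr rfl fun i _ => ?_
      rw [hGv_apply]
      simp [RCLike.inner_apply, mul_comm]
    have hinner_bound : ∀ v₁ v₂, |(∑ i, b x v₁ v₂ i * pd u i x)| ≤ Cb * ‖Gv x‖ := by
      intro v₁ v₂
      rw [hinner v₁ v₂]
      calc |inner ℝ (b x v₁ v₂) (Gv x)| ≤ ‖b x v₁ v₂‖ * ‖Gv x‖ := abs_real_inner_le_norm _ _
      _ ≤ Cb * ‖Gv x‖ := mul_le_mul_of_nonneg_right (hCb x v₁ v₂) (norm_nonneg _)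
    have hVbound : ∀ v₁ v₂, |V x v₁ v₂ * u x| ≤ CV * u x := by
      intro v₁ v₂
      rw [abs_mul, abs_of_pos (hupos x)]
      exact mul_le_mul_of_nonneg_right (hCV x v₁ v₂) (le_of_lt (hupos x))
    have hbdd : ∀ v₁, BddAbove (Set.range (F v₁)) := by
      intro v₁
      refine ⟨S + Cb * ‖Gv x‖ + CV * u x, ?_⟩
      rintro y ⟨v₂, rfl⟩
      have h1 := abs_le.1 (hinner_bound v₁ v₂)
      have h2 := abs_le.1 (hVbound v₁ v₂)
      simp only [hF]
      linarith [h1.2, h2.2]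
    have hfinal : ∀ ε > (0:ℝ), S ≤ Cb * ‖Gv x‖ + CV * u x + ε := by
      intro ε hε
      have hlt : (⨅ v₁, ⨆ v₂, F v₁ v₂) < ε := by
        rw [hsol x]; exact hε
      obtain ⟨v₁, hv₁⟩ := exists_lt_of_ciInf_lt hlt
      have hv₂ : ∀ v₂, F v₁ v₂ < ε := fun v₂ =>
        lt_of_le_of_lt (le_ciSup (hbdd v₁) v₂) hv₁
      obtain v₂ := Classical.arbitrary A₂
      have h := hv₂ v₂
      have h1 := abs_le.1 (hinner_bound v₁ v₂)
      have h2 := abs_le.1 (hVbound v₁ v₂)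
      simp only [hF] at h
      linarith [h1.1, h2.1]
    by_contra hcon
    push_neg at hcon
    have := hfinal ((S - (Cb * ‖Gv x‖ + CV * u x))/2) (by linarith)
    linarith
  -- minimum of u on the unit sphere
  obtain ⟨x₁, hx₁mem, hx₁min⟩ : ∃ x₁ ∈ Metric.sphere (0 : Euc d) 1,
      IsMinOn u (Metric.sphere (0 : Euc d) 1) x₁ := by
    apply (isCompact_sphere (0 : Euc d) 1).exists_isMinOn
    · refine ⟨EuclideanSpace.single ⟨0, hd⟩ (1:ℝ), ?_⟩
      simp [EuclideanSpace.norm_single]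
    · exact huC2.continuous.continuousOn
  set m := u x₁ with hm
  have hmpos : 0 < m := hupos x₁
  -- choice of γ
  set γ : ℝ := max 1 ((2/η₀) * (d * Ca + Cb + CV + 1)) with hγdef
  have hγ1 : 1 ≤ γ := le_max_left _ _
  have hγpos : 0 < γ := lt_of_lt_of_le one_pos hγ1
  have hγkey : γ * (d * Ca + Cb + CV + 1) ≤ γ^2 * η₀ / 2 := by
    have h1 : (2/η₀) * (d * Ca + Cb + CV + 1) ≤ γ := le_max_right _ _
    have h2 : d * Ca + Cb + CV + 1 ≤ γ * η₀ / 2 := by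
      rw [div_mul_eq_mul_div, div_le_iff₀ hη] at h1
      linarith
    calc γ * (d * Ca + Cb + CV + 1) ≤ γ * (γ * η₀ / 2) :=
          mul_le_mul_of_nonneg_left h2 (le_of_lt hγpos)
    _ = γ^2 * η₀ / 2 := by ring
  -- the annulus comparison
  have key := annulus_key a hposdef η₀ Ca Cb CV hη hellip hCa hCa0 hCb0 hCV0
    u huC2 hupos Gv hGv_apply keyA m hmpos
    (fun y hy => hx₁min (by simpa [mem_sphere_iff_norm] using hy)) γ hγ1 hγkey
  -- conclusion
  refine ⟨γ, hγpos, m * (Real.exp (-(γ/2)) - Real.exp (-γ)), ?_, 2, ?_⟩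
  · apply mul_pos hmpos
    rw [sub_pos]
    apply Real.exp_lt_exp.2
    linarith
  · intro x hx
    have hr1 : (1:ℝ) ≤ ‖x‖ := by linarith
    have hkey := key (‖x‖ + 1) (by linarith) x hr1 (by linarith)
    have h1 : Real.exp (-(γ * ‖x‖)) * Real.exp (-(γ/2)) ≤ φ0 γ (nsq x) := by
      rw [φ0, ← Real.exp_add]
      apply Real.exp_le_exp.2
      have hsq : Real.sqrt (nsq x + 1) ≤ ‖x‖ + 1/2 := by
        have hle : nsq x + 1 ≤ (‖x‖ + 1/2)^2 := by
          rw [nsq_eq_norm]; nlinarith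
        have h := Real.sqrt_le_sqrt hle
        rwa [Real.sqrt_sq (by linarith)] at h
      nlinarith [hγpos]
    have h2 : φ0 γ ((‖x‖+1)^2) ≤ Real.exp (-(γ * ‖x‖)) * Real.exp (-γ) := by
      rw [φ0, ← Real.exp_add]
      apply Real.exp_le_exp.2
      have hsq : ‖x‖ + 1 ≤ Real.sqrt ((‖x‖+1)^2 + 1) := by
        have := Real.sqrt_le_sqrt (by nlinarith : (‖x‖+1)^2 ≤ (‖x‖+1)^2 + 1)
        rwa [Real.sqrt_sq (by linarith)] at this
      nlinarith [hγpos]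
    calc m * (Real.exp (-(γ/2)) - Real.exp (-γ)) * Real.exp (-(γ * ‖x‖))
        = m * (Real.exp (-(γ * ‖x‖)) * Real.exp (-(γ/2))
            - Real.exp (-(γ * ‖x‖)) * Real.exp (-γ)) := by ring
      _ ≤ m * (φ0 γ (nsq x) - φ0 γ ((‖x‖+1)^2)) := by
          apply mul_le_mul_of_nonneg_left _ (le_of_lt hmpos)
          linarith
      _ ≤ u x := hkey
end
end
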